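/- arXiv:1202.2277 — 7 statements merged into one kernel-verified Lean document; each statement's English description precedes it below -/
import Mathlib

section
/- Fix real numbers μ < 1, μ̃ < 1 and ε > 0. There exists a real number a(ε) such that for every a ≤ a(ε) and every probability measure F supported in (-∞,1] with finite mean satisfying E(F) ≥ μ̃, one has |D̃_inf(F_{(a)},μ) − D̃_inf(F,μ)| ≤ ε. -/
open MeasureTheory ProbabilityTheory Set Filter
open scoped ENNReal NNReal Classical BoundedContinuousFunction

noncomputable section

/-- Kullback–Leibler divergence `D(F‖G)` between measures on ℝ
(`+∞` unless `F ≪ G` and `log (dF/dG)` is `F`-integrable). -/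
def KL (F G : Measure ℝ) : ℝ≥0∞ :=
  if F ≪ G ∧ Integrable (fun x => Real.log (F.rnDeriv G x).toReal) F
  then ENNReal.ofReal (∫ x, Real.log (F.rnDeriv G x).toReal ∂F) else ⊤

/-- `D_inf(F,μ;𝒜)`: infimum of `D(F‖G)` over probability measures `G` supported in
`(-∞,1]` with (finite) mean `E(G) > μ`.  (For `G` supported in `(-∞,1]` the mean is
well defined in `[-∞,1]`, and `E(G) > μ` holds iff `G` has integrable identity with
`∫ x dG > μ`.) -/
def DinfSemi (F : Measure ℝ) (μ : ℝ) : ℝ≥0∞ :=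
  ⨅ G ∈ {G : Measure ℝ | IsProbabilityMeasure G ∧ G (Set.Ioi 1) = 0 ∧
      Integrable (fun x : ℝ => x) G ∧ μ < ∫ x, x ∂G}, KL F G

/-- `D_inf(F,μ;𝒜_a)`: infimum of `D(F‖G)` over probability measures `G` supported in
`[a,1]` with mean `E(G) > μ`. -/
def DinfBdd (a : ℝ) (F : Measure ℝ) (μ : ℝ) : ℝ≥0∞ :=
  ⨅ G ∈ {G : Measure ℝ | IsProbabilityMeasure G ∧ G (Set.Icc a 1) = 1 ∧
      μ < ∫ x, x ∂G}, KL F G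

/-- `L(ν;F,μ) = ∫ log(1-(x-μ)ν) dF(x)`, as an extended real number in `[-∞,∞)`:
the value is `⊥ = -∞` when the integrand equals `-∞` on a non-`F`-null set or when
its (necessarily negative, for `F` supported in `(-∞,1]` with finite mean) part fails
to be integrable. -/
def LL (F : Measure ℝ) (μ ν : ℝ) : EReal :=
  if Integrable (fun x => Real.log (1 - (x - μ) * ν)) F ∧ F {x | 1 - (x - μ) * ν ≤ 0} = 0
  then ((∫ x, Real.log (1 - (x - μ) * ν) ∂F : ℝ) : EReal)
  else ⊥

/-- `D̃_inf(F,μ) = sup_{0 ≤ ν ≤ 1/(1-μ)} L(ν;F,μ)`. -/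
def Dtilde (F : Measure ℝ) (μ : ℝ) : EReal :=
  ⨆ ν ∈ Set.Icc (0 : ℝ) (1 - μ)⁻¹, LL F μ ν

/-- The moment generating function of `F` is finite in a neighborhood of the origin. -/
def MGFNearZero (F : Measure ℝ) : Prop :=
  ∃ ε > (0 : ℝ), ∀ l : ℝ, |l| < ε → Integrable (fun x => Real.exp (l * x)) F

/-- Fenchel–Legendre transform `Λ*(x) = sup_λ {λx - log ∫ e^{λu} dF(u)}` of the
logarithmic moment generating function of `F`. -/
def Legendre (F : Measure ℝ) (x : ℝ) : EReal :=
  ⨆ l : ℝ, ((l * x : ℝ) : EReal) -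
    ENNReal.log (∫⁻ y, ENNReal.ofReal (Real.exp (l * y)) ∂F)

/-- Empirical distribution `F̂_t = (1/t) ∑_{i<t} δ_{X_i}`. -/
def empMeas {Ω : Type*} [MeasurableSpace Ω] (X : ℕ → Ω → ℝ) (t : ℕ) (ω : Ω) : Measure ℝ :=
  (t : ℝ≥0∞)⁻¹ • ∑ i ∈ Finset.range t, Measure.dirac (X i ω)

/-- Empirical mean `μ̂_t = (1/t) ∑_{i<t} X_i`. -/
def empMean {Ω : Type*} (X : ℕ → Ω → ℝ) (t : ℕ) (ω : Ω) : ℝ :=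
  (∑ i ∈ Finset.range t, X i ω) / t

end


section StmtEightAux

open MeasureTheory Set

private lemma meas_g' (μ ν : ℝ) : Measurable fun x : ℝ => Real.log (1 - (x - μ) * ν) :=
  Real.measurable_log.comp (by fun_prop)

private lemma meas_max' (a : ℝ) : Measurable fun x : ℝ => max a x :=
  measurable_const.max measurable_id

private lemma meas_setS' (μ ν : ℝ) : MeasurableSet {x : ℝ | 1 - (x - μ) * ν ≤ 0} :=
  measurableSet_le (by fun_prop) measurable_const

private lemma LL_map_le (F : Measure ℝ) (μ a ν : ℝ) [IsProbabilityMeasure F]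
    (hν : 0 ≤ ν) (hint : Integrable (fun x : ℝ => x) F) :
    LL (Measure.map (fun x => max a x) F) μ ν ≤ LL F μ ν := by
  set φ : ℝ → ℝ := fun x => max a x with hφdef
  have hφ : Measurable φ := meas_max' a
  set g : ℝ → ℝ := fun x => Real.log (1 - (x - μ) * ν) with hgdef
  have hgm : Measurable g := meas_g' μ ν
  have hasm : AEStronglyMeasurable g (Measure.map φ F) := hgm.aestronglyMeasurable
  unfold LL
  by_cases hc : Integrable g (Measure.map φ F) ∧ Measure.map φ F {x | 1 - (x - μ) * ν ≤ 0} = 0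
  · obtain ⟨hGint, hGnull⟩ := hc
    have hGnull' : F (φ ⁻¹' {x | 1 - (x - μ) * ν ≤ 0}) = 0 := by
      rw [← Measure.map_apply hφ (meas_setS' μ ν)]; exact hGnull
    have hpos : ∀ᵐ x ∂F, 0 < 1 - (φ x - μ) * ν := by
      rw [ae_iff]; simpa [Set.preimage, not_lt] using hGnull'
    have hh : Integrable (fun x => g (φ x)) F :=
      (integrable_map_measure hasm hφ.aemeasurable).mp hGint
    have hgh : ∀ᵐ x ∂F, g (φ x) ≤ g x := by
      filter_upwards [hpos] with x hx
      exact Real.log_le_log hx (by nlinarith [le_max_right a x])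
    have hgub : ∀ᵐ x ∂F, g x ≤ (μ - x) * ν := by
      filter_upwards [hpos] with x hx
      have h2 : 0 < 1 - (x - μ) * ν := by nlinarith [le_max_right a x]
      have := Real.log_le_sub_one_of_pos h2
      simp only [hgdef]; linarith
    have hgInt : Integrable g F := by
      have hbInt : Integrable (fun x => |g (φ x)| + |(μ - x) * ν|) F := by
        refine Integrable.add hh.abs ?_
        exact (((integrable_const μ).sub hint).mul_const ν).abs
      refine Integrable.mono' hbInt hgm.aestronglyMeasurable ?_
      filter_upwards [hgh, hgub] with x h1 h2
      rw [Real.norm_eq_abs, abs_le]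
      constructor
      · have h3 := neg_abs_le (g (φ x)); have h4 := abs_nonneg ((μ - x) * ν); linarith
      · have h3 := le_abs_self ((μ - x) * ν); have h4 := abs_nonneg (g (φ x)); linarith
    have hFnull : F {x | 1 - (x - μ) * ν ≤ 0} = 0 := by
      refine measure_mono_null ?_ hGnull'
      intro x hx
      simp only [mem_setOf_eq, mem_preimage] at hx ⊢
      nlinarith [le_max_right a x]
    rw [if_pos ⟨hGint, hGnull⟩, if_pos ⟨hgInt, hFnull⟩]
    rw [integral_map hφ.aemeasurable hasm]
    exact EReal.coe_le_coe_iff.mpr (integral_mono_ae hh hgInt hgh)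
  · rw [if_neg hc]; exact bot_le

private lemma LL_le_map_add (F : Measure ℝ) (μ μt ε a ν : ℝ) [IsProbabilityMeasure F]
    (hμ : μ < 1) (haμ : a ≤ μ) (hν0 : 0 ≤ ν) (hν1 : ν * (1 - μ) ≤ 1)
    (hsupp : F (Set.Ioi 1) = 0) (hint : Integrable (fun x : ℝ => x) F)
    (hmean : μt ≤ ∫ x, x ∂F) (hε : (1 - μt) / (1 - a) ≤ ε) :
    LL F μ ν ≤ LL (Measure.map (fun x => max a x) F) μ ν + (ε : EReal) := by
  set φ : ℝ → ℝ := fun x => max a x with hφdef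
  have hφ : Measurable φ := meas_max' a
  set g : ℝ → ℝ := fun x => Real.log (1 - (x - μ) * ν) with hgdef
  have hgm : Measurable g := meas_g' μ ν
  have hasm : AEStronglyMeasurable g (Measure.map φ F) := hgm.aestronglyMeasurable
  have ha1 : a < 1 := lt_of_le_of_lt haμ hμ
  have h1a : (0:ℝ) < 1 - a := by linarith
  have hQ : 0 < 1 - (a - μ) * ν := by nlinarith
  have hga : g a = Real.log (1 - (a - μ) * ν) := by simp [hgdef]
  unfold LL
  by_cases hc : Integrable g F ∧ F {x | 1 - (x - μ) * ν ≤ 0} = 0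
  swap
  · rw [if_neg hc]; exact bot_le
  obtain ⟨hgInt, hFnull⟩ := hc
  have hpos : ∀ᵐ x ∂F, 0 < 1 - (x - μ) * ν := by
    rw [ae_iff]; simpa [not_lt] using hFnull
  have hle1 : ∀ᵐ x ∂F, x ≤ 1 := by
    rw [ae_iff]
    have : {x : ℝ | ¬ x ≤ 1} = Set.Ioi 1 := by ext x; simp [not_le]
    rw [this]; exact hsupp
  have hh : Integrable (fun x => g (φ x)) F := by
    refine Integrable.mono' (hgInt.abs.add (integrable_const |Real.log (1 - (a - μ) * ν)|))
      (hgm.comp hφ).aestronglyMeasurable (ae_of_all _ ?_)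
    intro x
    rw [Real.norm_eq_abs]
    show |g (max a x)| ≤ |g x| + |Real.log (1 - (a - μ) * ν)|
    rcases max_cases a x with ⟨he, _⟩ | ⟨he, _⟩
    · rw [he, hga]; exact le_add_of_nonneg_left (abs_nonneg _)
    · rw [he]; exact le_add_of_nonneg_right (abs_nonneg _)
  have hGnull : Measure.map φ F {x | 1 - (x - μ) * ν ≤ 0} = 0 := by
    rw [Measure.map_apply hφ (meas_setS' μ ν)]
    refine measure_mono_null ?_ hFnull
    intro x hx
    simp only [mem_preimage, mem_setOf_eq] at hx ⊢
    have hx' : 1 - (max a x - μ) * ν ≤ 0 := hx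
    rcases max_cases a x with ⟨he, _⟩ | ⟨he, _⟩
    · rw [he] at hx'; linarith
    · rwa [he] at hx'
  have hGint : Integrable g (Measure.map φ F) :=
    (integrable_map_measure hasm hφ.aemeasurable).mpr hh
  have hkey : ∀ᵐ x ∂F, g x ≤ g (φ x) + (1 - x) / (1 - a) := by
    filter_upwards [hpos, hle1] with x hxpos hx1
    rcases le_or_gt a x with hax | hax
    · have hφx : φ x = x := max_eq_right hax
      rw [hφx]
      have : 0 ≤ (1 - x) / (1 - a) := div_nonneg (by linarith) h1a.le
      linarith
    · have hφx : φ x = a := max_eq_left hax.le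
      rw [hφx, hga]
      have hdiv : g x - Real.log (1 - (a - μ) * ν) =
          Real.log ((1 - (x - μ) * ν) / (1 - (a - μ) * ν)) := by
        rw [Real.log_div (ne_of_gt hxpos) (ne_of_gt hQ)]
      have hlog : Real.log ((1 - (x - μ) * ν) / (1 - (a - μ) * ν)) ≤
          (1 - (x - μ) * ν) / (1 - (a - μ) * ν) - 1 :=
        Real.log_le_sub_one_of_pos (div_pos hxpos hQ)
      have hfrac : (1 - (x - μ) * ν) / (1 - (a - μ) * ν) - 1
          = (a - x) * ν / (1 - (a - μ) * ν) := by
        rw [div_sub_one (ne_of_gt hQ)]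
        ring
      have hbound : (a - x) * ν / (1 - (a - μ) * ν) ≤ (1 - x) / (1 - a) := by
        rw [div_le_div_iff₀ hQ h1a]
        nlinarith [mul_nonneg (sub_nonneg.mpr hax.le) (sub_nonneg.mpr hν1),
          mul_nonneg h1a.le hQ.le]
      rw [hfrac] at hlog
      linarith
  have hint2 : Integrable (fun x : ℝ => (1 - x) / (1 - a)) F :=
    ((integrable_const 1).sub hint).div_const _
  have hmono : ∫ x, g x ∂F ≤ ∫ x, (g (φ x) + (1 - x) / (1 - a)) ∂F :=
    integral_mono_ae hgInt (hh.add hint2) hkey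
  have hsplit : ∫ x, (g (φ x) + (1 - x) / (1 - a)) ∂F
      = (∫ x, g (φ x) ∂F) + (∫ x, (1 - x) / (1 - a) ∂F) := integral_add hh hint2
  have hval : ∫ x, (1 - x) / (1 - a) ∂F ≤ ε := by
    have heq : ∫ x, (1 - x) / (1 - a) ∂F = (1 - ∫ x, x ∂F) / (1 - a) := by
      rw [integral_div, integral_sub (integrable_const 1) hint]
      simp
    rw [heq]
    refine le_trans ((div_le_div_iff_of_pos_right h1a).mpr (by linarith)) hε
  rw [if_pos ⟨hgInt, hFnull⟩, if_pos ⟨hGint, hGnull⟩]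
  rw [integral_map hφ.aemeasurable hasm, ← EReal.coe_add]
  exact EReal.coe_le_coe_iff.mpr (by linarith)

end StmtEightAux

/-- (Lemma `lem_fa`.) Fix `μ, μ̃ < 1` and `ε > 0`. There exists
`a(ε)` such that for every `a ≤ a(ε)` and every probability measure `F` supported in
`(-∞,1]` with finite mean `E(F) ≥ μ̃`, one has `|D̃_inf(F_{(a)},μ) - D̃_inf(F,μ)| ≤ ε`,
where `F_{(a)}` is the pushforward of `F` under `x ↦ max a x`. -/
theorem stmt8 (μ μt ε : ℝ) (hμ : μ < 1) (hμt : μt < 1) (hε : 0 < ε) :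
    ∃ A : ℝ, ∀ a ≤ A, ∀ F : Measure ℝ, IsProbabilityMeasure F → F (Set.Ioi 1) = 0 →
      Integrable (fun x : ℝ => x) F → μt ≤ ∫ x, x ∂F →
      Dtilde (Measure.map (fun x => max a x) F) μ ≤ Dtilde F μ + (ε : EReal) ∧
      Dtilde F μ ≤ Dtilde (Measure.map (fun x => max a x) F) μ + (ε : EReal) := by
  refine ⟨min μ (1 - (1 - μt) / ε), fun a ha F hF hsupp hint hmean => ?_⟩
  haveI := hF
  have haμ : a ≤ μ := le_trans ha (min_le_left _ _)
  have ha1 : a < 1 := lt_of_le_of_lt haμ hμ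
  have h1a : (0:ℝ) < 1 - a := by linarith
  have hεa : (1 - μt) / (1 - a) ≤ ε := by
    have h2 : a ≤ 1 - (1 - μt) / ε := le_trans ha (min_le_right _ _)
    have h3 : (1 - μt) / ε ≤ 1 - a := by linarith
    rw [div_le_iff₀ hε] at h3
    rw [div_le_iff₀ h1a]
    nlinarith
  have hεE : (0 : EReal) ≤ (ε : EReal) := by exact_mod_cast hε.le
  constructor
  · have h1 : Dtilde (Measure.map (fun x => max a x) F) μ ≤ Dtilde F μ := by
      refine iSup₂_le fun ν hν => ?_
      exact (LL_map_le F μ a ν hν.1 hint).trans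
        (le_iSup₂ (f := fun ν (_ : ν ∈ Set.Icc (0:ℝ) (1 - μ)⁻¹) => LL F μ ν) ν hν)
    calc Dtilde (Measure.map (fun x => max a x) F) μ ≤ Dtilde F μ := h1
      _ = Dtilde F μ + 0 := (add_zero _).symm
      _ ≤ Dtilde F μ + (ε : EReal) := add_le_add_right hεE _
  · refine iSup₂_le fun ν hν => ?_
    have h1μ : (0:ℝ) < 1 - μ := by linarith
    have hν1 : ν * (1 - μ) ≤ 1 := by
      have := mul_le_mul_of_nonneg_right hν.2 h1μ.le
      rwa [inv_mul_cancel₀ (ne_of_gt h1μ)] at this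
    refine (LL_le_map_add F μ μt ε a ν hμ haμ hν.1 hν1 hsupp hint hmean hεa).trans ?_
    exact add_le_add_left
      (le_iSup₂ (f := fun ν (_ : ν ∈ Set.Icc (0:ℝ) (1 - μ)⁻¹) =>
        LL (Measure.map (fun x => max a x) F) μ ν) ν hν) _
end

section
/- Let ε > 0 and μ, μ̃ < 1 be arbitrary, and let F be a probability measure supported in (-∞,1] with finite moment generating function near 0. Then there exists δ > 0 such that for every probability measure G supported in (-∞,1] with finite mean satisfying E(G) ≥ μ̃ and d_L(F,G) ≤ δ, one has |D̃_inf(G,μ) − D̃_inf(F,μ)| ≤ ε. -/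
open MeasureTheory ProbabilityTheory Set Filter
open scoped ENNReal NNReal Classical BoundedContinuousFunction

noncomputable section

/-- Lévy distance between two (probability) measures on ℝ:
`d_L(F,G) = inf{h > 0 : ∀ x, F(x-h) - h ≤ G(x) ≤ F(x+h) + h}`. -/
def levyDist (F G : Measure ℝ) : ℝ :=
  sInf {h : ℝ | 0 < h ∧ ∀ x : ℝ,
    (F (Set.Iic (x - h))).toReal - h ≤ (G (Set.Iic x)).toReal ∧
    (G (Set.Iic x)).toReal ≤ (F (Set.Iic (x + h))).toReal + h}

end

lemma st10_ae_le_one (H : Measure ℝ) (hs : H (Set.Ioi 1) = 0) : ∀ᵐ x ∂H, x ≤ 1 := by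
  rw [MeasureTheory.ae_iff]
  convert hs using 2
  ext x; simp

lemma st10_integrable_id (F : Measure ℝ) (hmgf : MGFNearZero F) :
    Integrable (fun x : ℝ => x) F := by
  obtain ⟨e, he, hF⟩ := hmgf
  have h1 : Integrable (fun x => Real.exp ((e/2) * x)) F := hF _ (by rw [abs_of_pos]; linarith; linarith)
  have h2 : Integrable (fun x => Real.exp ((-(e/2)) * x)) F := hF _ (by rw [abs_of_neg]; linarith; linarith)
  refine Integrable.mono' (((h1.add h2).div_const (e/2))) measurable_id.aestronglyMeasurable ?_
  filter_upwards with x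
  have hx : (e/2) * |x| ≤ Real.exp ((e/2)*|x|) := by
    have := Real.add_one_le_exp ((e/2)*|x|); linarith
  have hxx : Real.exp ((e/2)*|x|) ≤ Real.exp ((e/2)*x) + Real.exp ((-(e/2))*x) := by
    rcases abs_cases x with ⟨h, _⟩ | ⟨h, _⟩
    · rw [h]; have := (Real.exp_pos ((-(e/2))*x)).le; linarith
    · rw [h, mul_neg, ← neg_mul]; have := (Real.exp_pos ((e/2)*x)).le; linarith
  have he2 : (0:ℝ) < e/2 := by linarith
  simp only [Pi.add_apply, Real.norm_eq_abs]
  rw [le_div_iff₀ he2, mul_comm]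
  exact hx.trans hxx

lemma st10_log_le_two_sqrt (y : ℝ) (hy : 0 ≤ y) : Real.log (1+y) ≤ 2*Real.sqrt y := by
  have h1 : Real.sqrt (1+y) ≤ 1 + Real.sqrt y := by
    rw [show (1:ℝ) + Real.sqrt y = Real.sqrt 1 + Real.sqrt y by rw [Real.sqrt_one]]
    have : Real.sqrt (1+y) ≤ Real.sqrt ((Real.sqrt 1 + Real.sqrt y)^2) := by
      apply Real.sqrt_le_sqrt
      rw [Real.sqrt_one]
      nlinarith [Real.sq_sqrt hy, Real.sqrt_nonneg y]
    rwa [Real.sqrt_sq (by positivity)] at this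
  have h2 : Real.log (1+y) = 2 * Real.log (Real.sqrt (1+y)) := by
    rw [Real.log_sqrt (by linarith)]; ring
  have h3 : Real.log (Real.sqrt (1+y)) ≤ Real.sqrt (1+y) - 1 :=
    Real.log_le_sub_one_of_pos (Real.sqrt_pos.2 (by linarith))
  nlinarith

lemma st10_log_diff (a b c : ℝ) (hc : 0 < c) (hb : c ≤ b) (hba : b ≤ a) :
    Real.log a - Real.log b ≤ (a-b)/c := by
  have hb0 : 0 < b := lt_of_lt_of_le hc hb
  have ha0 : 0 < a := lt_of_lt_of_le hb0 hba
  rw [← Real.log_div (ne_of_gt ha0) (ne_of_gt hb0)]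
  have := Real.log_le_sub_one_of_pos (div_pos ha0 hb0)
  have h2 : a/b - 1 = (a-b)/b := by field_simp
  have h3 : (a-b)/b ≤ (a-b)/c := by
    apply div_le_div_of_nonneg_left (by linarith) hc hb
  linarith

lemma st10_tele (g : ℕ → ℝ) (k n : ℕ) (hk : k ≤ n) :
    ∑ j ∈ Finset.Ico k n, (g j - g (j+1)) = g k - g n := by
  induction n, hk using Nat.le_induction with
  | base => simp
  | succ n hn ih => rw [Finset.sum_Ico_succ_top hn, ih]; ring

lemma st10_integrable_log (H : Measure ℝ) [IsProbabilityMeasure H]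
    (hid : Integrable (fun x : ℝ => x) H) (q : ℝ → ℝ) (hq : Continuous q) (c C : ℝ)
    (hc : 0 < c) (h1 : ∀ x, c ≤ q x) (h2 : ∀ x, q x ≤ C + C*|x|) :
    Integrable (fun x => Real.log (q x)) H := by
  have hqpos : ∀ x, 0 < q x := fun x => lt_of_lt_of_le hc (h1 x)
  have hcont : Continuous (fun x => Real.log (q x)) := hq.log (fun x => ne_of_gt (hqpos x))
  refine Integrable.mono' (g := fun x => |Real.log c| + (|C| + |C| * |x|))
    ?_ hcont.aestronglyMeasurable ?_
  · exact (integrable_const _).add ((integrable_const _).add (hid.abs.const_mul _))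
  · filter_upwards with x
    rw [Real.norm_eq_abs, abs_le]
    constructor
    · have := Real.log_le_log hc (h1 x)
      have hlc : -|Real.log c| ≤ Real.log c := neg_abs_le _
      have h5 : (0:ℝ) ≤ |C| * |x| := by positivity
      have h6 : (0:ℝ) ≤ |C| := abs_nonneg _
      linarith
    · have hl : Real.log (q x) ≤ q x - 1 := Real.log_le_sub_one_of_pos (hqpos x)
      have : q x ≤ |C| + |C| * |x| := (h2 x).trans (by
        have : C ≤ |C| := le_abs_self C
        have h4 : C * |x| ≤ |C| * |x| := mul_le_mul_of_nonneg_right this (abs_nonneg x)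
        linarith)
      have hla : |Real.log c| ≥ 0 := abs_nonneg _
      linarith

lemma st10_p_lb (μ ηq ν c : ℝ) (hμ : μ < 1) (hη1 : ηq ≤ 1) (hν0 : 0 ≤ ν)
    (hν : ν ≤ (1-ηq)*(1-μ)⁻¹) (hc : c ≤ 1) : ηq ≤ 1 - (c-μ)*ν := by
  rcases le_or_gt c μ with h | h
  · have : (c-μ)*ν ≤ 0 := mul_nonpos_iff.2 (Or.inr ⟨by linarith, hν0⟩)
    linarith
  · have hμ1 : (0:ℝ) < 1 - μ := by linarith
    have hinv : (1-μ) * (1-μ)⁻¹ = 1 := mul_inv_cancel₀ (ne_of_gt hμ1)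
    have h1 : (c-μ)*ν ≤ (1-μ)*((1-ηq)*(1-μ)⁻¹) := by
      apply mul_le_mul (by linarith) hν hν0 (by linarith)
    have h2 : (1-μ)*((1-ηq)*(1-μ)⁻¹) = 1-ηq := by
      field_simp
    linarith

lemma st10_integrable_LL (μ ηq : ℝ) (hμ : μ < 1) (hη0 : 0 < ηq) (hη1 : ηq ≤ 1)
    (H : Measure ℝ) [IsProbabilityMeasure H] (hs : H (Set.Ioi 1) = 0)
    (hi : Integrable (fun x : ℝ => x) H)
    (ν : ℝ) (hν0 : 0 ≤ ν) (hν : ν ≤ (1-ηq)*(1-μ)⁻¹) :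
    Integrable (fun x => Real.log (1-(x-μ)*ν)) H := by
  have hfb : Integrable (fun x => Real.log (1-(min x 1-μ)*ν)) H := by
    apply st10_integrable_log H hi _ (by fun_prop) ηq (1 + ν*(2+|μ|)) hη0
    · intro x
      exact st10_p_lb μ ηq ν _ hμ hη1 hν0 hν (min_le_right x 1)
    · intro x
      have h1 : |min x 1| ≤ |x| + 1 := by
        rcases min_cases x 1 with ⟨h, _⟩ | ⟨h, _⟩ <;> rw [h]
        · linarith [abs_nonneg x]
        · rw [abs_one]; linarith [abs_nonneg x]
      have h2 : 1-(min x 1-μ)*ν ≤ 1 + (|min x 1| + |μ|)*ν := by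
        have : -(min x 1 - μ) ≤ |min x 1| + |μ| := by
          rcases abs_cases (min x 1) with ⟨ha, _⟩ | ⟨ha, _⟩ <;>
            rcases abs_cases μ with ⟨hb, _⟩ | ⟨hb, _⟩ <;> linarith
        nlinarith
      have h3 : (|min x 1| + |μ|)*ν ≤ (|x| + 1 + |μ|)*ν := by
        apply mul_le_mul_of_nonneg_right (by linarith) hν0
      have h4 : (0:ℝ) ≤ |μ| := abs_nonneg μ
      have h5 : (0:ℝ) ≤ |x| := abs_nonneg x
      nlinarith [mul_nonneg hν0 h5, mul_nonneg (mul_nonneg hν0 h4) h5]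
  apply hfb.congr
  filter_upwards [st10_ae_le_one H hs] with x hx
  rw [min_eq_left hx]

lemma st10_LL_eq (μ ηq : ℝ) (hμ : μ < 1) (hη0 : 0 < ηq) (hη1 : ηq ≤ 1)
    (H : Measure ℝ) [IsProbabilityMeasure H] (hs : H (Set.Ioi 1) = 0)
    (hi : Integrable (fun x : ℝ => x) H)
    (ν : ℝ) (hν0 : 0 ≤ ν) (hν : ν ≤ (1-ηq)*(1-μ)⁻¹) :
    LL H μ ν = ((∫ x, Real.log (1-(x-μ)*ν) ∂H : ℝ) : EReal) := by
  rw [LL, if_pos]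
  refine ⟨st10_integrable_LL μ ηq hμ hη0 hη1 H hs hi ν hν0 hν, ?_⟩
  refine measure_mono_null (fun x hx => ?_) hs
  simp only [Set.mem_setOf_eq] at hx
  by_contra hx1
  simp only [Set.mem_Ioi, not_lt] at hx1
  have := st10_p_lb μ ηq ν x hμ hη1 hν0 hν hx1
  linarith

lemma st10_int_log_le (μ ν : ℝ) (H : Measure ℝ) [IsProbabilityMeasure H]
    (hi : Integrable (fun x : ℝ => x) H)
    (hint : Integrable (fun x => Real.log (1-(x-μ)*ν)) H)
    (hnull : H {x | 1-(x-μ)*ν ≤ 0} = 0) :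
    ∫ x, Real.log (1-(x-μ)*ν) ∂H ≤ ν * (μ - ∫ x, x ∂H) := by
  have hae : ∀ᵐ x ∂H, 0 < 1-(x-μ)*ν := by
    rw [MeasureTheory.ae_iff]
    convert hnull using 2
    ext x; simp [not_lt]
  have hint2 : Integrable (fun x : ℝ => (μ - x)*ν) H :=
    ((integrable_const μ).sub hi).mul_const ν
  have h1 : ∫ x, Real.log (1-(x-μ)*ν) ∂H ≤ ∫ x, (μ - x)*ν ∂H := by
    apply integral_mono_ae hint hint2
    filter_upwards [hae] with x hx
    have := Real.log_le_sub_one_of_pos hx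
    nlinarith
  have h2 : ∫ x, (μ - x)*ν ∂H = (μ - ∫ x, x ∂H)*ν := by
    rw [integral_mul_const, integral_sub (integrable_const μ) hi, integral_const]
    simp [measure_univ]
  rw [h2] at h1
  linarith [h1]

lemma st10_conc (μ ηq : ℝ) (hμ : μ < 1) (hη0 : 0 < ηq) (hη1 : ηq ≤ 1/2)
    (H : Measure ℝ) [IsProbabilityMeasure H] (hs : H (Set.Ioi 1) = 0)
    (hi : Integrable (fun x : ℝ => x) H) (C : ℝ)
    (hC : ∀ ν', 0 ≤ ν' → ν' ≤ (1-μ)⁻¹ → ν' * (μ - ∫ x, x ∂H) ≤ C)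
    (ν : ℝ) (hν0 : 0 ≤ ν) (hν : ν ≤ (1-μ)⁻¹) :
    LL H μ ν ≤ ((∫ x, Real.log (1-(x-μ)*((1-ηq)*ν)) ∂H + ηq*C : ℝ) : EReal) := by
  by_cases hcase : Integrable (fun x => Real.log (1 - (x - μ) * ν)) H ∧
      H {x | 1 - (x - μ) * ν ≤ 0} = 0
  · rw [LL, if_pos hcase]
    rw [EReal.coe_le_coe_iff]
    obtain ⟨hint, hnull⟩ := hcase
    set r := ∫ x, Real.log (1-(x-μ)*ν) ∂H with hr
    have hrC : r ≤ C := (st10_int_log_le μ ν H hi hint hnull).trans (hC ν hν0 hν)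
    have hν'0 : 0 ≤ (1-ηq)*ν := mul_nonneg (by linarith) hν0
    have hν' : (1-ηq)*ν ≤ (1-ηq)*(1-μ)⁻¹ := mul_le_mul_of_nonneg_left hν (by linarith)
    have hint' : Integrable (fun x => Real.log (1-(x-μ)*((1-ηq)*ν))) H :=
      st10_integrable_LL μ ηq hμ hη0 (by linarith) H hs hi _ hν'0 hν'
    have hae : ∀ᵐ x ∂H, 0 < 1-(x-μ)*ν := by
      rw [MeasureTheory.ae_iff]
      convert hnull using 2
      ext x; simp [not_lt]
    have hmono : (1-ηq) * r ≤ ∫ x, Real.log (1-(x-μ)*((1-ηq)*ν)) ∂H := by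
      rw [hr, ← integral_const_mul]
      apply integral_mono_ae (hint.const_mul _) hint'
      filter_upwards [hae] with x hx
      have key : (1-ηq) • Real.log (1-(x-μ)*ν) + ηq • Real.log 1 ≤
          Real.log ((1-ηq) • (1-(x-μ)*ν) + ηq • 1) :=
        (strictConcaveOn_log_Ioi.concaveOn).2 (Set.mem_Ioi.2 hx) (Set.mem_Ioi.2 one_pos)
          (by linarith) hη0.le (by ring)
      simp only [smul_eq_mul, Real.log_one, mul_zero, add_zero] at key
      have heq : (1-ηq) * (1-(x-μ)*ν) + ηq * 1 = 1-(x-μ)*((1-ηq)*ν) := by ring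
      rw [heq] at key
      linarith
    nlinarith [mul_le_mul_of_nonneg_left hrC hη0.le]
  · rw [LL, if_neg hcase]
    exact bot_le

lemma st10_half (μ ε ηq C : ℝ) (hμ : μ < 1) (hε : 0 < ε) (hη0 : 0 < ηq) (hη1 : ηq ≤ 1/2)
    (hηC : ηq*C ≤ ε/4)
    (H₁ H₂ : Measure ℝ) [IsProbabilityMeasure H₁] [IsProbabilityMeasure H₂]
    (hs₁ : H₁ (Set.Ioi 1) = 0) (hs₂ : H₂ (Set.Ioi 1) = 0)
    (hi₁ : Integrable (fun x : ℝ => x) H₁) (hi₂ : Integrable (fun x : ℝ => x) H₂)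
    (hC₁ : ∀ ν', 0 ≤ ν' → ν' ≤ (1-μ)⁻¹ → ν' * (μ - ∫ x, x ∂H₁) ≤ C)
    (hclose : ∀ ν', 0 ≤ ν' → ν' ≤ (1-ηq)*(1-μ)⁻¹ →
      |∫ x, Real.log (1-(x-μ)*ν') ∂H₁ - ∫ x, Real.log (1-(x-μ)*ν') ∂H₂| ≤ ε/2) :
    Dtilde H₁ μ ≤ Dtilde H₂ μ + (ε : EReal) := by
  rw [Dtilde]
  apply iSup₂_le
  intro ν hν
  obtain ⟨hν0, hνmax⟩ := hν
  have hν'0 : 0 ≤ (1-ηq)*ν := mul_nonneg (by linarith) hν0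
  have hν' : (1-ηq)*ν ≤ (1-ηq)*(1-μ)⁻¹ := mul_le_mul_of_nonneg_left hνmax (by linarith)
  have step1 : LL H₁ μ ν ≤ ((∫ x, Real.log (1-(x-μ)*((1-ηq)*ν)) ∂H₁ + ηq*C : ℝ) : EReal) :=
    st10_conc μ ηq hμ hη0 hη1 H₁ hs₁ hi₁ C hC₁ ν hν0 hνmax
  have step2 : (∫ x, Real.log (1-(x-μ)*((1-ηq)*ν)) ∂H₁ + ηq*C : ℝ) ≤
      (∫ x, Real.log (1-(x-μ)*((1-ηq)*ν)) ∂H₂ + (ε/2 + ηq*C) : ℝ) := by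
    have := hclose _ hν'0 hν'
    rw [abs_le] at this
    linarith [this.2]
  have step3 : LL H₂ μ ((1-ηq)*ν) =
      ((∫ x, Real.log (1-(x-μ)*((1-ηq)*ν)) ∂H₂ : ℝ) : EReal) :=
    st10_LL_eq μ ηq hμ hη0 (by linarith) H₂ hs₂ hi₂ _ hν'0 hν'
  have step4 : LL H₂ μ ((1-ηq)*ν) ≤ Dtilde H₂ μ := by
    rw [Dtilde]
    have hmem : (1-ηq)*ν ∈ Set.Icc (0:ℝ) (1-μ)⁻¹ := by
      constructor
      · exact hν'0
      · refine hν'.trans ?_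
        have hpos : (0:ℝ) ≤ (1-μ)⁻¹ := by
          apply inv_nonneg.2; linarith
        nlinarith
    exact le_iSup₂ (f := fun ν' (_ : ν' ∈ Set.Icc (0:ℝ) (1-μ)⁻¹) => LL H₂ μ ν') _ hmem
  calc LL H₁ μ ν ≤ ((∫ x, Real.log (1-(x-μ)*((1-ηq)*ν)) ∂H₁ + ηq*C : ℝ) : EReal) := step1
    _ ≤ ((∫ x, Real.log (1-(x-μ)*((1-ηq)*ν)) ∂H₂ + (ε/2 + ηq*C) : ℝ) : EReal) :=
        EReal.coe_le_coe_iff.2 step2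
    _ = ((∫ x, Real.log (1-(x-μ)*((1-ηq)*ν)) ∂H₂ : ℝ) : EReal) + ((ε/2 + ηq*C : ℝ) : EReal) := by
        rw [← EReal.coe_add]
    _ = LL H₂ μ ((1-ηq)*ν) + ((ε/2 + ηq*C : ℝ) : EReal) := by rw [step3]
    _ ≤ Dtilde H₂ μ + (ε : EReal) := by
        apply add_le_add step4
        apply EReal.coe_le_coe_iff.2
        linarith

noncomputable def st10_g (μ ν M x : ℝ) : ℝ := Real.log (1 - (min (max x (-M)) 1 - μ) * ν)

noncomputable def st10_cM (μ ηq M : ℝ) : ℝ :=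
  2*Real.sqrt ((1-μ)⁻¹*(1+|μ|)) / Real.sqrt (1+M) + |Real.log ηq| / (1+M)

lemma st10_cM_nonneg (μ ηq M : ℝ) (hM : 0 ≤ M) : 0 ≤ st10_cM μ ηq M := by
  rw [st10_cM]; positivity

lemma st10_g_pos (μ ηq ν M : ℝ) (hμ : μ < 1) (hη1 : ηq ≤ 1) (hν0 : 0 ≤ ν)
    (hν : ν ≤ (1-ηq)*(1-μ)⁻¹) (x : ℝ) : ηq ≤ 1 - (min (max x (-M)) 1 - μ) * ν :=
  st10_p_lb μ ηq ν _ hμ hη1 hν0 hν (min_le_right _ 1)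

lemma st10_g_anti (μ ηq ν M : ℝ) (hμ : μ < 1) (hη0 : 0 < ηq) (hη1 : ηq ≤ 1) (hν0 : 0 ≤ ν)
    (hν : ν ≤ (1-ηq)*(1-μ)⁻¹) {x y : ℝ} (hxy : x ≤ y) : st10_g μ ν M y ≤ st10_g μ ν M x := by
  rw [st10_g, st10_g]
  have hcl : min (max x (-M)) 1 ≤ min (max y (-M)) 1 :=
    min_le_min (max_le_max hxy le_rfl) le_rfl
  have hq : 1 - (min (max y (-M)) 1 - μ) * ν ≤ 1 - (min (max x (-M)) 1 - μ) * ν := by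
    nlinarith [mul_le_mul_of_nonneg_right (sub_le_sub_right hcl μ) hν0]
  exact Real.log_le_log (lt_of_lt_of_le hη0 (st10_g_pos μ ηq ν M hμ hη1 hν0 hν y)) hq

lemma st10_g_abs_le (μ ηq ν M : ℝ) (hμ : μ < 1) (hη0 : 0 < ηq) (hη1 : ηq ≤ 1) (hν0 : 0 ≤ ν)
    (hν : ν ≤ (1-ηq)*(1-μ)⁻¹) (hM : 0 ≤ M) (x : ℝ) :
    |st10_g μ ν M x| ≤ |Real.log ηq| + (1-μ)⁻¹*(M+|μ|+1) := by
  have hνmax : ν ≤ (1-μ)⁻¹ := by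
    refine hν.trans ?_
    have h0 : (0:ℝ) ≤ (1-μ)⁻¹ := by apply inv_nonneg.2; linarith
    nlinarith
  have hpos := st10_g_pos μ ηq ν M hμ hη1 hν0 hν x
  have hcl1 : min (max x (-M)) 1 ≤ 1 := min_le_right _ _
  have hcl2 : -M ≤ min (max x (-M)) 1 := le_min (le_max_right _ _) (by linarith)
  have hub : 1 - (min (max x (-M)) 1 - μ) * ν ≤ 1 + (1-μ)⁻¹*(M+|μ|+1) := by
    have h1 : -(min (max x (-M)) 1 - μ) ≤ M + |μ| := by
      rcases abs_cases μ with ⟨h, _⟩ | ⟨h, _⟩ <;> linarith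
    have h2 : -(min (max x (-M)) 1 - μ) * ν ≤ (M+|μ|+1) * (1-μ)⁻¹ := by
      rcases le_or_gt (-(min (max x (-M)) 1 - μ)) 0 with h | h
      · have : -(min (max x (-M)) 1 - μ) * ν ≤ 0 := mul_nonpos_iff.2 (Or.inr ⟨h, hν0⟩)
        have h3 : (0:ℝ) ≤ (M+|μ|+1) * (1-μ)⁻¹ := by
          apply mul_nonneg (by positivity) (inv_nonneg.2 (by linarith))
        linarith
      · apply mul_le_mul (by linarith) hνmax hν0 (by positivity)
    nlinarith
  rw [st10_g, abs_le]
  constructor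
  · have h1 : Real.log ηq ≤ Real.log (1 - (min (max x (-M)) 1 - μ) * ν) :=
      Real.log_le_log hη0 hpos
    have h2 : -|Real.log ηq| ≤ Real.log ηq := neg_abs_le _
    have h3 : (0:ℝ) ≤ (1-μ)⁻¹*(M+|μ|+1) := by
      apply mul_nonneg (inv_nonneg.2 (by linarith)) (by positivity)
    linarith
  · have h1 := Real.log_le_sub_one_of_pos (lt_of_lt_of_le hη0 hpos)
    have h2 : (0:ℝ) ≤ |Real.log ηq| := abs_nonneg _
    linarith

lemma st10_integrable_g (μ ηq ν M : ℝ) (hμ : μ < 1) (hη0 : 0 < ηq) (hη1 : ηq ≤ 1)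
    (hν0 : 0 ≤ ν) (hν : ν ≤ (1-ηq)*(1-μ)⁻¹) (hM : 0 ≤ M)
    (H : Measure ℝ) [IsProbabilityMeasure H] (hi : Integrable (fun x : ℝ => x) H) :
    Integrable (st10_g μ ν M) H := by
  have hνmax : ν ≤ (1-μ)⁻¹ := by
    refine hν.trans ?_
    have h0 : (0:ℝ) ≤ (1-μ)⁻¹ := by apply inv_nonneg.2; linarith
    nlinarith
  apply st10_integrable_log H hi (fun x => 1 - (min (max x (-M)) 1 - μ) * ν)
    (by fun_prop) ηq (1 + (1-μ)⁻¹*(M+|μ|+1)) hη0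
  · intro x; exact st10_g_pos μ ηq ν M hμ hη1 hν0 hν x
  · intro x
    have hcl1 : min (max x (-M)) 1 ≤ 1 := min_le_right _ _
    have hcl2 : -M ≤ min (max x (-M)) 1 := le_min (le_max_right _ _) (by linarith)
    have h1 : -(min (max x (-M)) 1 - μ) ≤ M + |μ| := by
      rcases abs_cases μ with ⟨h, _⟩ | ⟨h, _⟩ <;> linarith
    have h2 : -(min (max x (-M)) 1 - μ) * ν ≤ (M+|μ|+1) * (1-μ)⁻¹ := by
      rcases le_or_gt (-(min (max x (-M)) 1 - μ)) 0 with h | h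
      · have h4 : -(min (max x (-M)) 1 - μ) * ν ≤ 0 := mul_nonpos_iff.2 (Or.inr ⟨h, hν0⟩)
        have h3 : (0:ℝ) ≤ (M+|μ|+1) * (1-μ)⁻¹ := by
          apply mul_nonneg (by positivity) (inv_nonneg.2 (by linarith))
        linarith
      · apply mul_le_mul (by linarith) hνmax hν0 (by positivity)
    have h3 : (0:ℝ) ≤ (1 + (1-μ)⁻¹*(M+|μ|+1)) * |x| := by
      apply mul_nonneg _ (abs_nonneg x)
      have : (0:ℝ) ≤ (1-μ)⁻¹*(M+|μ|+1) := by
        apply mul_nonneg (inv_nonneg.2 (by linarith)) (by positivity)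
      linarith
    nlinarith

lemma st10_integrable_fb (μ ηq ν : ℝ) (hμ : μ < 1) (hη0 : 0 < ηq) (hη1 : ηq ≤ 1)
    (hν0 : 0 ≤ ν) (hν : ν ≤ (1-ηq)*(1-μ)⁻¹)
    (H : Measure ℝ) [IsProbabilityMeasure H] (hi : Integrable (fun x : ℝ => x) H) :
    Integrable (fun x => Real.log (1-(min x 1-μ)*ν)) H := by
  apply st10_integrable_log H hi _ (by fun_prop) ηq (1 + ν*(2+|μ|)) hη0
  · intro x
    exact st10_p_lb μ ηq ν _ hμ hη1 hν0 hν (min_le_right x 1)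
  · intro x
    have h1 : |min x 1| ≤ |x| + 1 := by
      rcases min_cases x 1 with ⟨h, _⟩ | ⟨h, _⟩ <;> rw [h]
      · linarith [abs_nonneg x]
      · rw [abs_one]; linarith [abs_nonneg x]
    have h2 : 1-(min x 1-μ)*ν ≤ 1 + (|min x 1| + |μ|)*ν := by
      have : -(min x 1 - μ) ≤ |min x 1| + |μ| := by
        rcases abs_cases (min x 1) with ⟨ha, _⟩ | ⟨ha, _⟩ <;>
          rcases abs_cases μ with ⟨hb, _⟩ | ⟨hb, _⟩ <;> linarith
      nlinarith
    have h3 : (|min x 1| + |μ|)*ν ≤ (|x| + 1 + |μ|)*ν := by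
      apply mul_le_mul_of_nonneg_right (by linarith) hν0
    have h4 : (0:ℝ) ≤ |μ| := abs_nonneg μ
    have h5 : (0:ℝ) ≤ |x| := abs_nonneg x
    nlinarith [mul_nonneg hν0 h5, mul_nonneg (mul_nonneg hν0 h4) h5]

lemma st10_tail (μ ηq M ν ε : ℝ) (hμ : μ < 1) (hη0 : 0 < ηq) (hη1 : ηq ≤ 1)
    (hM : 1+|μ| ≤ M) (hν0 : 0 ≤ ν) (hν : ν ≤ (1-ηq)*(1-μ)⁻¹)
    (H : Measure ℝ) [IsProbabilityMeasure H] (hs : H (Set.Ioi 1) = 0)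
    (hi : Integrable (fun x : ℝ => x) H)
    (htH : st10_cM μ ηq M * (1 - ∫ x, x ∂H) ≤ ε/8) :
    |∫ x, Real.log (1-(x-μ)*ν) ∂H - ∫ x, st10_g μ ν M x ∂H| ≤ ε/8 := by
  have hM0 : (0:ℝ) ≤ M := by linarith [abs_nonneg μ]
  have hM1 : (0:ℝ) < 1 + M := by linarith
  have hνmax : ν ≤ (1-μ)⁻¹ := by
    refine hν.trans ?_
    have h0 : (0:ℝ) ≤ (1-μ)⁻¹ := by apply inv_nonneg.2; linarith
    nlinarith
  have hcM := st10_cM_nonneg μ ηq M hM0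
  have hfb : Integrable (fun x => Real.log (1-(min x 1-μ)*ν)) H :=
    st10_integrable_fb μ ηq ν hμ hη0 hη1 hν0 hν H hi
  have hg : Integrable (st10_g μ ν M) H :=
    st10_integrable_g μ ηq ν M hμ hη0 hη1 hν0 hν hM0 H hi
  have h_eq : ∫ x, Real.log (1-(x-μ)*ν) ∂H = ∫ x, Real.log (1-(min x 1-μ)*ν) ∂H := by
    apply integral_congr_ae
    filter_upwards [st10_ae_le_one H hs] with x hx
    rw [min_eq_left hx]
  -- pointwise: g ≤ fb
  have hge : ∀ x, st10_g μ ν M x ≤ Real.log (1-(min x 1-μ)*ν) := by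
    intro x
    rw [st10_g]
    have hcl : min x 1 ≤ min (max x (-M)) 1 := min_le_min (le_max_left _ _) le_rfl
    have hq : 1 - (min (max x (-M)) 1 - μ) * ν ≤ 1 - (min x 1 - μ) * ν := by
      nlinarith [mul_le_mul_of_nonneg_right (sub_le_sub_right hcl μ) hν0]
    exact Real.log_le_log (lt_of_lt_of_le hη0 (st10_g_pos μ ηq ν M hμ hη1 hν0 hν x)) hq
  -- pointwise: fb - g ≤ indicator
  have hdiff : ∀ x, Real.log (1-(min x 1-μ)*ν) - st10_g μ ν M x ≤
      Set.indicator (Set.Iio (-M)) (fun x => st10_cM μ ηq M * (1-x)) x := by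
    intro x
    rcases le_or_gt (-M) x with h | h
    · rw [Set.indicator_of_notMem (by simp [Set.mem_Iio]; linarith)]
      have : st10_g μ ν M x = Real.log (1-(min x 1-μ)*ν) := by
        rw [st10_g, max_eq_left h]
      linarith
    · rw [Set.indicator_of_mem (Set.mem_Iio.2 h)]
      have hx1 : x < 1 := by
        rcases abs_cases μ with ⟨ha, _⟩ | ⟨ha, _⟩ <;> linarith
      have hxμ : x < μ := by
        rcases abs_cases μ with ⟨ha, _⟩ | ⟨ha, _⟩ <;> linarith
      have hmin : min x 1 = x := min_eq_left hx1.le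
      -- g x ≥ log ηq
      have hglb : Real.log ηq ≤ st10_g μ ν M x := by
        rw [st10_g]
        exact Real.log_le_log hη0 (st10_g_pos μ ηq ν M hμ hη1 hν0 hν x)
      -- fb x = log (1 + y)
      set y := (μ - x)*ν with hy
      have hy0 : 0 ≤ y := mul_nonneg (by linarith) hν0
      have hfbx : Real.log (1-(min x 1-μ)*ν) = Real.log (1+y) := by
        rw [hmin, hy]; ring_nf
      have hlog2 : Real.log (1+y) ≤ 2*Real.sqrt y := st10_log_le_two_sqrt y hy0
      -- y ≤ νmax(1+|μ|)(1-x)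
      have hyb : y ≤ (1-μ)⁻¹*(1+|μ|)*(1-x) := by
        have h1 : μ - x ≤ (1+|μ|)*(1-x) := by
          have h2 : (0:ℝ) ≤ |μ| := abs_nonneg μ
          have h3 : x ≤ 0 := by linarith
          nlinarith [le_abs_self μ, neg_abs_le μ]
        have h4 : y ≤ (1-μ)⁻¹*(μ-x) := by
          rw [hy, mul_comm]
          apply mul_le_mul_of_nonneg_right hνmax (by linarith)
        have h5 : (1-μ)⁻¹*(μ-x) ≤ (1-μ)⁻¹*((1+|μ|)*(1-x)) := by
          apply mul_le_mul_of_nonneg_left h1 (inv_nonneg.2 (by linarith))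
        calc y ≤ (1-μ)⁻¹*(μ-x) := h4
          _ ≤ (1-μ)⁻¹*((1+|μ|)*(1-x)) := h5
          _ = (1-μ)⁻¹*(1+|μ|)*(1-x) := by ring
      have hsy : Real.sqrt y ≤ Real.sqrt ((1-μ)⁻¹*(1+|μ|)) * Real.sqrt (1-x) := by
        calc Real.sqrt y ≤ Real.sqrt ((1-μ)⁻¹*(1+|μ|)*(1-x)) := Real.sqrt_le_sqrt hyb
          _ = Real.sqrt ((1-μ)⁻¹*(1+|μ|)) * Real.sqrt (1-x) := by
              rw [Real.sqrt_mul (mul_nonneg (inv_nonneg.2 (by linarith)) (by positivity))]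
      have hsx : Real.sqrt (1-x) ≤ (1-x) / Real.sqrt (1+M) := by
        rw [le_div_iff₀ (Real.sqrt_pos.2 hM1)]
        calc Real.sqrt (1-x) * Real.sqrt (1+M) ≤ Real.sqrt (1-x) * Real.sqrt (1-x) := by
              apply mul_le_mul_of_nonneg_left (Real.sqrt_le_sqrt (by linarith)) (Real.sqrt_nonneg _)
          _ = 1-x := Real.mul_self_sqrt (by linarith)
      have habs : -Real.log ηq ≤ |Real.log ηq| / (1+M) * (1-x) := by
        have h1 : -Real.log ηq ≤ |Real.log ηq| := neg_le_abs _
        have h2 : |Real.log ηq| ≤ |Real.log ηq| / (1+M) * (1-x) := by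
          rw [div_mul_eq_mul_div, le_div_iff₀ hM1]
          apply mul_le_mul_of_nonneg_left (by linarith) (abs_nonneg _)
        linarith
      have hterm1 : 2*Real.sqrt y ≤
          2*Real.sqrt ((1-μ)⁻¹*(1+|μ|)) / Real.sqrt (1+M) * (1-x) := by
        have h1 : 2*Real.sqrt y ≤ 2*(Real.sqrt ((1-μ)⁻¹*(1+|μ|)) * ((1-x)/Real.sqrt (1+M))) := by
          have := mul_le_mul_of_nonneg_left
            (hsx.trans_eq' rfl) (Real.sqrt_nonneg ((1-μ)⁻¹*(1+|μ|)))
          nlinarith [Real.sqrt_nonneg ((1-μ)⁻¹*(1+|μ|)), hsy,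
            mul_le_mul_of_nonneg_left hsx (Real.sqrt_nonneg ((1-μ)⁻¹*(1+|μ|)))]
        calc 2*Real.sqrt y ≤ 2*(Real.sqrt ((1-μ)⁻¹*(1+|μ|)) * ((1-x)/Real.sqrt (1+M))) := h1
          _ = 2*Real.sqrt ((1-μ)⁻¹*(1+|μ|)) / Real.sqrt (1+M) * (1-x) := by ring
      rw [hfbx, st10_cM]
      have hfin : Real.log (1+y) - st10_g μ ν M x ≤ 2*Real.sqrt y + (-Real.log ηq) := by
        linarith
      calc Real.log (1+y) - st10_g μ ν M x ≤ 2*Real.sqrt y + (-Real.log ηq) := hfin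
        _ ≤ 2*Real.sqrt ((1-μ)⁻¹*(1+|μ|)) / Real.sqrt (1+M) * (1-x)
            + |Real.log ηq| / (1+M) * (1-x) := add_le_add hterm1 habs
        _ = (2*Real.sqrt ((1-μ)⁻¹*(1+|μ|)) / Real.sqrt (1+M) + |Real.log ηq| / (1+M)) * (1-x) := by
            ring
  -- integrate
  have hind_int : Integrable (Set.indicator (Set.Iio (-M)) (fun x => st10_cM μ ηq M * (1-x))) H :=
    (((integrable_const (1:ℝ)).sub hi).const_mul (st10_cM μ ηq M)).indicator measurableSet_Iio
  have hone : Integrable (fun x : ℝ => st10_cM μ ηq M * (1-x)) H :=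
    ((integrable_const (1:ℝ)).sub hi).const_mul (st10_cM μ ηq M)
  have hIdiff : ∫ x, Real.log (1-(min x 1-μ)*ν) ∂H - ∫ x, st10_g μ ν M x ∂H ≤ ε/8 := by
    have h1 : ∫ x, (Real.log (1-(min x 1-μ)*ν) - st10_g μ ν M x) ∂H ≤
        ∫ x, Set.indicator (Set.Iio (-M)) (fun x => st10_cM μ ηq M * (1-x)) x ∂H :=
      integral_mono (hfb.sub hg) hind_int hdiff
    rw [integral_sub hfb hg] at h1
    have h2 : ∫ x, Set.indicator (Set.Iio (-M)) (fun x => st10_cM μ ηq M * (1-x)) x ∂H ≤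
        ∫ x, st10_cM μ ηq M * (1-x) ∂H := by
      rw [integral_indicator measurableSet_Iio]
      apply setIntegral_le_integral hone
      filter_upwards [st10_ae_le_one H hs] with x hx
      have : (0:ℝ) ≤ 1 - x := by linarith
      positivity
    have h3 : ∫ x, st10_cM μ ηq M * (1-x) ∂H = st10_cM μ ηq M * (1 - ∫ x, x ∂H) := by
      rw [integral_const_mul, integral_sub (integrable_const 1) hi, integral_const]
      simp [measure_univ]
    linarith
  have hIpos : 0 ≤ ∫ x, Real.log (1-(min x 1-μ)*ν) ∂H - ∫ x, st10_g μ ν M x ∂H := by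
    have := integral_mono hg hfb hge
    linarith
  rw [h_eq, abs_le]
  exact ⟨by linarith, hIdiff⟩

lemma st10_toReal_le_one (H : Measure ℝ) [IsProbabilityMeasure H] (s : Set ℝ) :
    (H s).toReal ≤ 1 := by
  have h1 : H s ≤ 1 := prob_le_one
  have := ENNReal.toReal_mono (by simp) h1
  simpa using this

set_option maxHeartbeats 1000000 in
lemma st10_mid (μ ηq M τ h : ℝ) (n : ℕ)
    (hμ : μ < 1) (hη0 : 0 < ηq) (hη1 : ηq ≤ 1) (hM : 1+|μ| ≤ M)
    (ν : ℝ) (hν0 : 0 ≤ ν) (hν : ν ≤ (1-ηq)*(1-μ)⁻¹)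
    (hn : 0 < n) (hgrid : (1-μ)⁻¹/ηq * ((1+M)/n) ≤ τ) (hτ0 : 0 < τ)
    (hh0 : 0 < h) (hhΔ : h ≤ (1+M)/n)
    (F G : Measure ℝ) [IsProbabilityMeasure F] [IsProbabilityMeasure G]
    (hsF : F (Set.Ioi 1) = 0) (hsG : G (Set.Ioi 1) = 0)
    (hiF : Integrable (fun x : ℝ => x) F) (hiG : Integrable (fun x : ℝ => x) G)
    (hband : ∀ x, (F (Set.Iic (x-h))).toReal - h ≤ (G (Set.Iic x)).toReal ∧
      (G (Set.Iic x)).toReal ≤ (F (Set.Iic (x+h))).toReal + h) :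
    |∫ x, st10_g μ ν M x ∂F - ∫ x, st10_g μ ν M x ∂G| ≤
      2*τ + h * (2*(|Real.log ηq| + (1-μ)⁻¹*(M+|μ|+1))) := by
  have hM0 : (0:ℝ) ≤ M := by linarith [abs_nonneg μ]
  have hM1 : (0:ℝ) < 1 + M := by linarith
  have hn0 : (0:ℝ) < (n:ℝ) := by exact_mod_cast hn
  obtain ⟨Q, hQdef⟩ : ∃ Q : ℝ, Q = |Real.log ηq| + (1-μ)⁻¹*(M+|μ|+1) := ⟨_, rfl⟩
  obtain ⟨Δ, hΔdef⟩ : ∃ Δ : ℝ, Δ = (1+M)/n := ⟨_, rfl⟩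
  have hΔ0 : 0 < Δ := hΔdef ▸ div_pos hM1 hn0
  obtain ⟨xj, hxj⟩ : ∃ xj : ℕ → ℝ, ∀ j, xj j = -M + j*Δ := ⟨_, fun _ => rfl⟩
  have hnΔ : (n:ℝ)*Δ = 1+M := by rw [hΔdef]; field_simp
  have hxn : xj n = 1 := by rw [hxj]; linarith
  have hxj_mono : ∀ {j k : ℕ}, j ≤ k → xj j ≤ xj k := by
    intro j k hjk
    rw [hxj, hxj]
    have hc : (j:ℝ) ≤ (k:ℝ) := by exact_mod_cast hjk
    nlinarith [mul_le_mul_of_nonneg_right hc hΔ0.le]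
  have hxj_lb : ∀ j : ℕ, -M ≤ xj j := by
    intro j
    rw [hxj]
    have hc : (0:ℝ) ≤ (j:ℝ) := Nat.cast_nonneg j
    nlinarith [mul_nonneg hc hΔ0.le]
  have hxj_ub : ∀ j, j ≤ n → xj j ≤ 1 := fun j hj => (hxj_mono hj).trans_eq hxn
  have hxsucc : ∀ j : ℕ, xj (j+1) = xj j + Δ := by
    intro j; rw [hxj, hxj]; push_cast; ring
  obtain ⟨gj, hgj⟩ : ∃ gj : ℕ → ℝ, ∀ j, gj j = st10_g μ ν M (xj j) := ⟨_, fun _ => rfl⟩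
  obtain ⟨d, hd⟩ : ∃ d : ℕ → ℝ, ∀ j, d j = gj j - gj (j+1) := ⟨_, fun _ => rfl⟩
  have hganti : ∀ {x y : ℝ}, x ≤ y → st10_g μ ν M y ≤ st10_g μ ν M x :=
    fun {x y} hxy => st10_g_anti μ ηq ν M hμ hη0 hη1 hν0 hν hxy
  have hd0 : ∀ j, 0 ≤ d j := by
    intro j
    have := hganti (hxj_mono (Nat.le_succ j))
    rw [hd, hgj, hgj]; linarith
  have hclamp_eq : ∀ j, j ≤ n → gj j = Real.log (1 - (xj j - μ) * ν) := by
    intro j hj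
    rw [hgj, st10_g, max_eq_left (hxj_lb j), min_eq_left (hxj_ub j hj)]
  have hνmax : ν ≤ (1-μ)⁻¹ := by
    refine hν.trans ?_
    have h0 : (0:ℝ) ≤ (1-μ)⁻¹ := by apply inv_nonneg.2; linarith
    nlinarith
  have hdτ : ∀ j, j < n → d j ≤ τ := by
    intro j hj
    have hj1 : j + 1 ≤ n := hj
    rw [hd, hclamp_eq j hj.le, hclamp_eq (j+1) hj1]
    have hqlb : ηq ≤ 1 - (xj (j+1) - μ) * ν :=
      st10_p_lb μ ηq ν _ hμ hη1 hν0 hν (hxj_ub (j+1) hj1)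
    have hqle : 1 - (xj (j+1) - μ) * ν ≤ 1 - (xj j - μ) * ν := by
      have := hxj_mono (Nat.le_succ j)
      nlinarith
    have hld := st10_log_diff (1 - (xj j - μ) * ν) (1 - (xj (j+1) - μ) * ν) ηq hη0 hqlb hqle
    have hdq : (1 - (xj j - μ) * ν) - (1 - (xj (j+1) - μ) * ν) = ν * Δ := by
      rw [hxsucc j]; ring
    rw [hdq] at hld
    refine hld.trans ?_
    have h1 : ν * Δ ≤ (1-μ)⁻¹ * Δ := mul_le_mul_of_nonneg_right hνmax hΔ0.le
    have h2 : ν * Δ / ηq ≤ (1-μ)⁻¹ * Δ / ηq := div_le_div_of_nonneg_right h1 hη0.le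
    have h3 : (1-μ)⁻¹ * Δ / ηq = (1-μ)⁻¹/ηq * ((1+M)/n) := by
      rw [hΔdef]; ring
    linarith
  have hQj : ∀ j, |gj j| ≤ Q := by
    intro j
    rw [hgj, hQdef]
    exact st10_g_abs_le μ ηq ν M hμ hη0 hη1 hν0 hν hM0 (xj j)
  have hsum_d : ∑ j ∈ Finset.range n, d j = gj 0 - gj n := by
    calc ∑ j ∈ Finset.range n, d j = ∑ j ∈ Finset.range n, (gj j - gj (j+1)) :=
          Finset.sum_congr rfl (fun j _ => hd j)
      _ = gj 0 - gj n := Finset.sum_range_sub' gj n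
  have hsum_dB : ∑ j ∈ Finset.range n, d j ≤ 2*Q := by
    rw [hsum_d]
    have h0 := hQj 0
    have hn' := hQj n
    rw [abs_le] at h0 hn'
    linarith [h0.2, hn'.1]
  obtain ⟨T, hT⟩ : ∃ T : ℝ → ℝ, ∀ x, T x =
      gj n + ∑ j ∈ Finset.range n, Set.indicator (Set.Iic (xj j)) (fun _ => d j) x :=
    ⟨_, fun _ => rfl⟩
  have hsand : ∀ x : ℝ, x ≤ 1 → T x ≤ st10_g μ ν M x ∧ st10_g μ ν M x ≤ T x + τ := by
    intro x hx1
    obtain ⟨k, hkdef⟩ : ∃ k : ℕ, k = ⌈(x+M)/Δ⌉₊ := ⟨_, rfl⟩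
    have hkn : k ≤ n := by
      rw [hkdef, Nat.ceil_le, div_le_iff₀ hΔ0]
      linarith
    have hiff : ∀ j : ℕ, x ≤ xj j ↔ k ≤ j := by
      intro j
      rw [hkdef]
      constructor
      · intro hxjj
        rw [Nat.ceil_le, div_le_iff₀ hΔ0]
        rw [hxj] at hxjj
        linarith
      · intro hkj
        have h1 : (x+M)/Δ ≤ (⌈(x+M)/Δ⌉₊:ℝ) := Nat.le_ceil _
        have h2 : ((⌈(x+M)/Δ⌉₊:ℕ):ℝ) ≤ (j:ℝ) := by exact_mod_cast hkj
        rw [div_le_iff₀ hΔ0] at h1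
        rw [hxj]
        nlinarith [mul_le_mul_of_nonneg_right h2 hΔ0.le]
    have hxk : x ≤ xj k := (hiff k).2 le_rfl
    have hsum : ∑ j ∈ Finset.range n, Set.indicator (Set.Iic (xj j)) (fun _ => d j) x =
        gj k - gj n := by
      have h1 : ∀ j ∈ Finset.range n,
          Set.indicator (Set.Iic (xj j)) (fun _ => d j) x = if k ≤ j then d j else 0 := by
        intro j _
        rw [Set.indicator_apply]
        by_cases hc : x ∈ Set.Iic (xj j)
        · rw [if_pos hc, if_pos ((hiff j).1 hc)]
        · rw [if_neg hc, if_neg (fun hkj => hc (Set.mem_Iic.2 ((hiff j).2 hkj)))]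
      rw [Finset.sum_congr rfl h1, Finset.range_eq_Ico,
        ← Finset.sum_Ico_consecutive _ (Nat.zero_le k) hkn]
      have h2 : ∑ j ∈ Finset.Ico 0 k, (if k ≤ j then d j else 0) = 0 := by
        apply Finset.sum_eq_zero
        intro j hj
        rw [Finset.mem_Ico] at hj
        rw [if_neg (by omega)]
      have h3 : ∑ j ∈ Finset.Ico k n, (if k ≤ j then d j else 0) =
          ∑ j ∈ Finset.Ico k n, (gj j - gj (j+1)) := by
        apply Finset.sum_congr rfl
        intro j hj
        rw [Finset.mem_Ico] at hj
        rw [if_pos hj.1, hd]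
      rw [h2, h3, st10_tele gj k n hkn]
      ring
    constructor
    · rw [hT, hsum]
      have h5 : st10_g μ ν M (xj k) ≤ st10_g μ ν M x := hganti hxk
      rw [← hgj k] at h5
      linarith
    · rw [hT, hsum]
      rcases Nat.eq_zero_or_pos k with hk0 | hkpos
      · subst hk0
        have hgx : st10_g μ ν M x ≤ gj 0 := by
          have hcl : st10_g μ ν M x = st10_g μ ν M (max x (-M)) := by
            rw [st10_g, st10_g, max_assoc, max_self]
          have hx0 : xj 0 = -M := by rw [hxj]; simp
          rw [hcl, hgj, hx0]
          exact hganti (le_max_right x (-M))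
        linarith
      · obtain ⟨k', rfl⟩ : ∃ k', k = k' + 1 := ⟨k-1, by omega⟩
        have hlt : ¬ (x ≤ xj k') := by
          rw [hiff k']; omega
        push_neg at hlt
        have h1 : st10_g μ ν M x ≤ gj k' := by
          rw [hgj]
          exact hganti hlt.le
        have h2 : gj k' = gj (k'+1) + d k' := by rw [hd]; ring
        have h3 : d k' ≤ τ := hdτ k' (by omega)
        linarith
  -- integral of T
  have hT_comp : ∀ (H : Measure ℝ), IsProbabilityMeasure H → (Integrable T H ∧
      ∫ x, T x ∂H = gj n + ∑ j ∈ Finset.range n, d j * (H (Set.Iic (xj j))).toReal) := by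
    intro H hH
    have hint_each : ∀ j ∈ Finset.range n,
        Integrable (Set.indicator (Set.Iic (xj j)) (fun _ => d j)) H := by
      intro j _
      exact (integrable_const (d j)).indicator measurableSet_Iic
    have hint_sum : Integrable
        (fun x => ∑ j ∈ Finset.range n, Set.indicator (Set.Iic (xj j)) (fun _ => d j) x) H :=
      integrable_finset_sum _ hint_each
    have hTeq : T = fun x =>
        gj n + ∑ j ∈ Finset.range n, Set.indicator (Set.Iic (xj j)) (fun _ => d j) x :=
      funext hT
    constructor
    · rw [hTeq]
      exact (integrable_const (gj n)).add hint_sum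
    · rw [hTeq]
      rw [integral_add (integrable_const _) hint_sum, integral_const]
      simp only [probReal_univ, one_smul]
      congr 1
      rw [integral_finset_sum _ hint_each]
      apply Finset.sum_congr rfl
      intro j _
      rw [integral_indicator_const (d j) measurableSet_Iic, smul_eq_mul, mul_comm]; rfl
  obtain ⟨hTintF, hTF⟩ := hT_comp F inferInstance
  obtain ⟨hTintG, hTG⟩ := hT_comp G inferInstance
  have hgF : Integrable (st10_g μ ν M) F :=
    st10_integrable_g μ ηq ν M hμ hη0 hη1 hν0 hν hM0 F hiF
  have hgG : Integrable (st10_g μ ν M) G :=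
    st10_integrable_g μ ηq ν M hμ hη0 hη1 hν0 hν hM0 G hiG
  have hsandI : ∀ (H : Measure ℝ), IsProbabilityMeasure H → H (Set.Ioi 1) = 0 →
      Integrable T H → Integrable (st10_g μ ν M) H →
      (∫ x, T x ∂H ≤ ∫ x, st10_g μ ν M x ∂H ∧
       ∫ x, st10_g μ ν M x ∂H ≤ ∫ x, T x ∂H + τ) := by
    intro H hH hs hTint hgint
    constructor
    · apply integral_mono_ae hTint hgint
      filter_upwards [st10_ae_le_one H hs] with x hx
      exact (hsand x hx).1
    · have h1 : ∫ x, st10_g μ ν M x ∂H ≤ ∫ x, (T x + τ) ∂H := by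
        apply integral_mono_ae hgint (hTint.add (integrable_const τ))
        filter_upwards [st10_ae_le_one H hs] with x hx
        exact (hsand x hx).2
      rw [integral_add hTint (integrable_const τ), integral_const] at h1
      simpa [measure_univ] using h1
  obtain ⟨hTFg, hgFT⟩ := hsandI F inferInstance hsF hTintF hgF
  obtain ⟨hTGg, hgGT⟩ := hsandI G inferInstance hsG hTintG hgG
  -- CDF band comparisons
  obtain ⟨FF, hFF⟩ : ∃ FF : ℕ → ℝ, ∀ j, FF j = (F (Set.Iic (xj j))).toReal := ⟨_, fun _ => rfl⟩
  obtain ⟨GG, hGG⟩ : ∃ GG : ℕ → ℝ, ∀ j, GG j = (G (Set.Iic (xj j))).toReal := ⟨_, fun _ => rfl⟩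
  have hFFmono : ∀ j, FF j ≤ FF (j+1) := by
    intro j
    rw [hFF, hFF]
    exact ENNReal.toReal_mono (measure_ne_top F _)
      (measure_mono (Set.Iic_subset_Iic.2 (hxj_mono (Nat.le_succ j))))
  have hGGmono : ∀ j, GG j ≤ GG (j+1) := by
    intro j
    rw [hGG, hGG]
    exact ENNReal.toReal_mono (measure_ne_top G _)
      (measure_mono (Set.Iic_subset_Iic.2 (hxj_mono (Nat.le_succ j))))
  have hshift : ∀ (a : ℕ → ℝ), (∀ j, a j ≤ a (j+1)) → (∀ j, 0 ≤ a j) → (∀ j, a j ≤ 1) →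
      ∑ j ∈ Finset.range n, d j * a (j+1) ≤ ∑ j ∈ Finset.range n, d j * a j + τ := by
    intro a hmono h0 hub
    have h1 : ∑ j ∈ Finset.range n, d j * a (j+1) - ∑ j ∈ Finset.range n, d j * a j =
        ∑ j ∈ Finset.range n, d j * (a (j+1) - a j) := by
      rw [← Finset.sum_sub_distrib]
      apply Finset.sum_congr rfl
      intro j _; ring
    have h2 : ∑ j ∈ Finset.range n, d j * (a (j+1) - a j) ≤
        ∑ j ∈ Finset.range n, τ * (a (j+1) - a j) := by
      apply Finset.sum_le_sum
      intro j hj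
      rw [Finset.mem_range] at hj
      exact mul_le_mul_of_nonneg_right (hdτ j hj) (by linarith [hmono j])
    have h3 : ∑ j ∈ Finset.range n, τ * (a (j+1) - a j) = τ * (a n - a 0) := by
      rw [← Finset.mul_sum, Finset.sum_range_sub]
    have h4 : τ * (a n - a 0) ≤ τ := by
      nlinarith [hub n, h0 0]
    linarith
  have hc1 : ∑ j ∈ Finset.range n, d j * GG j ≤
      ∑ j ∈ Finset.range n, d j * FF j + (τ + h * (2*Q)) := by
    have hstep : ∀ j, j < n → GG j ≤ FF (j+1) + h := by
      intro j hj
      have h1 := (hband (xj j)).2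
      have h2 : (F (Set.Iic (xj j + h))).toReal ≤ FF (j+1) := by
        rw [hFF]
        apply ENNReal.toReal_mono (measure_ne_top F _)
        apply measure_mono (Set.Iic_subset_Iic.2 _)
        rw [hxsucc j]; linarith
      rw [hGG]
      linarith
    have h1 : ∑ j ∈ Finset.range n, d j * GG j ≤
        ∑ j ∈ Finset.range n, d j * (FF (j+1) + h) := by
      apply Finset.sum_le_sum
      intro j hj
      rw [Finset.mem_range] at hj
      exact mul_le_mul_of_nonneg_left (hstep j hj) (hd0 j)
    have h2 : ∑ j ∈ Finset.range n, d j * (FF (j+1) + h) =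
        ∑ j ∈ Finset.range n, d j * FF (j+1) + (∑ j ∈ Finset.range n, d j) * h := by
      rw [Finset.sum_mul, ← Finset.sum_add_distrib]
      apply Finset.sum_congr rfl
      intro j _; ring
    have h3 : (∑ j ∈ Finset.range n, d j) * h ≤ 2*Q*h :=
      mul_le_mul_of_nonneg_right hsum_dB hh0.le
    have h4 := hshift FF hFFmono (fun j => hFF j ▸ ENNReal.toReal_nonneg)
      (fun j => hFF j ▸ st10_toReal_le_one F _)
    nlinarith
  have hc2 : ∑ j ∈ Finset.range n, d j * FF j ≤
      ∑ j ∈ Finset.range n, d j * GG j + (τ + h * (2*Q)) := by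
    have hstep : ∀ j, j < n → FF j ≤ GG (j+1) + h := by
      intro j hj
      have h1 := (hband (xj j + h)).1
      have heq : xj j + h - h = xj j := by ring
      rw [heq] at h1
      have h2 : (G (Set.Iic (xj j + h))).toReal ≤ GG (j+1) := by
        rw [hGG]
        apply ENNReal.toReal_mono (measure_ne_top G _)
        apply measure_mono (Set.Iic_subset_Iic.2 _)
        rw [hxsucc j]; linarith
      rw [hFF]
      linarith
    have h1 : ∑ j ∈ Finset.range n, d j * FF j ≤
        ∑ j ∈ Finset.range n, d j * (GG (j+1) + h) := by
      apply Finset.sum_le_sum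
      intro j hj
      rw [Finset.mem_range] at hj
      exact mul_le_mul_of_nonneg_left (hstep j hj) (hd0 j)
    have h2 : ∑ j ∈ Finset.range n, d j * (GG (j+1) + h) =
        ∑ j ∈ Finset.range n, d j * GG (j+1) + (∑ j ∈ Finset.range n, d j) * h := by
      rw [Finset.sum_mul, ← Finset.sum_add_distrib]
      apply Finset.sum_congr rfl
      intro j _; ring
    have h3 : (∑ j ∈ Finset.range n, d j) * h ≤ 2*Q*h :=
      mul_le_mul_of_nonneg_right hsum_dB hh0.le
    have h4 := hshift GG hGGmono (fun j => hGG j ▸ ENNReal.toReal_nonneg)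
      (fun j => hGG j ▸ st10_toReal_le_one G _)
    nlinarith
  have hFFeq : ∑ j ∈ Finset.range n, d j * (F (Set.Iic (xj j))).toReal =
      ∑ j ∈ Finset.range n, d j * FF j :=
    Finset.sum_congr rfl (fun j _ => by rw [hFF])
  have hGGeq : ∑ j ∈ Finset.range n, d j * (G (Set.Iic (xj j))).toReal =
      ∑ j ∈ Finset.range n, d j * GG j :=
    Finset.sum_congr rfl (fun j _ => by rw [hGG])
  rw [hFFeq] at hTF
  rw [hGGeq] at hTG
  rw [abs_le]
  constructor
  · have hkey : ∫ x, st10_g μ ν M x ∂G ≤ ∫ x, st10_g μ ν M x ∂F + (2*τ + h*(2*Q)) := by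
      rw [hTF] at hTFg
      rw [hTG] at hgGT
      linarith
    rw [hQdef] at hkey
    linarith
  · have hkey : ∫ x, st10_g μ ν M x ∂F ≤ ∫ x, st10_g μ ν M x ∂G + (2*τ + h*(2*Q)) := by
      rw [hTG] at hTGg
      rw [hTF] at hgFT
      linarith
    rw [hQdef] at hkey
    linarith

set_option maxHeartbeats 1000000 in
/-- (Lemma `lem_levy`.) Let `ε > 0`, `μ, μ̃ < 1`, and let `F` be a
probability measure supported in `(-∞,1]` with finite mgf near `0`. There exists
`δ > 0` such that `|D̃_inf(G,μ) - D̃_inf(F,μ)| ≤ ε` for every probability measure `G`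
supported in `(-∞,1]` with finite mean `E(G) ≥ μ̃` and `d_L(F,G) ≤ δ`. -/
theorem stmt10 (ε μ μt : ℝ) (hε : 0 < ε) (hμ : μ < 1) (hμt : μt < 1)
    (F : Measure ℝ) [IsProbabilityMeasure F] (hsupp : F (Set.Ioi 1) = 0)
    (hmgf : MGFNearZero F) :
    ∃ δ > (0 : ℝ), ∀ G : Measure ℝ, IsProbabilityMeasure G → G (Set.Ioi 1) = 0 →
      Integrable (fun x : ℝ => x) G → μt ≤ ∫ x, x ∂G → levyDist F G ≤ δ →
      Dtilde G μ ≤ Dtilde F μ + (ε : EReal) ∧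
      Dtilde F μ ≤ Dtilde G μ + (ε : EReal) := by
  have hμ1 : (0:ℝ) < 1 - μ := by linarith
  have hνm0 : (0:ℝ) < (1-μ)⁻¹ := inv_pos.2 hμ1
  have hiF : Integrable (fun x : ℝ => x) F := st10_integrable_id F hmgf
  obtain ⟨EF, hEF⟩ : ∃ EF : ℝ, EF = ∫ x, x ∂F := ⟨_, rfl⟩
  obtain ⟨C, hCdef⟩ : ∃ C : ℝ, C = (1-μ)⁻¹*(|μ| + |μt| + |EF|) + 1 := ⟨_, rfl⟩
  have hC0 : 0 < C := by
    rw [hCdef]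
    have : (0:ℝ) ≤ (1-μ)⁻¹*(|μ| + |μt| + |EF|) := by positivity
    linarith
  have habs3 : (0:ℝ) ≤ |μ| + |μt| + |EF| := by positivity
  have hboundC : ∀ b : ℝ, b ≤ |μ| + |μt| + |EF| → ∀ ν', 0 ≤ ν' → ν' ≤ (1-μ)⁻¹ →
      ν' * b ≤ C := by
    intro b hb ν' h0 h1
    rcases le_or_gt b 0 with hb0 | hb0
    · have : ν' * b ≤ 0 := mul_nonpos_iff.2 (Or.inl ⟨h0, hb0⟩)
      linarith
    · have h2 : ν' * b ≤ (1-μ)⁻¹ * b := mul_le_mul_of_nonneg_right h1 hb0.le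
      have h3 : (1-μ)⁻¹ * b ≤ (1-μ)⁻¹ * (|μ| + |μt| + |EF|) :=
        mul_le_mul_of_nonneg_left hb hνm0.le
      rw [hCdef]; linarith
  have hCF : ∀ ν', 0 ≤ ν' → ν' ≤ (1-μ)⁻¹ → ν' * (μ - ∫ x, x ∂F) ≤ C := by
    intro ν' h0 h1
    refine hboundC (μ - ∫ x, x ∂F) ?_ ν' h0 h1
    rw [← hEF]
    have := le_abs_self μ
    have := neg_abs_le EF
    have := abs_nonneg μt
    linarith
  -- choose ηq
  obtain ⟨ηq, hηqdef⟩ : ∃ ηq : ℝ, ηq = min (1/2) (ε/(4*C)) := ⟨_, rfl⟩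
  have hη0 : 0 < ηq := by
    rw [hηqdef]
    exact lt_min (by norm_num) (by positivity)
  have hη12 : ηq ≤ 1/2 := hηqdef ▸ min_le_left _ _
  have hη1 : ηq ≤ 1 := by linarith
  have hηC : ηq * C ≤ ε/4 := by
    have h1 : ηq ≤ ε/(4*C) := hηqdef ▸ min_le_right _ _
    have h2 : ηq * C ≤ (ε/(4*C)) * C := mul_le_mul_of_nonneg_right h1 hC0.le
    have h3 : (ε/(4*C)) * C = ε/4 := by field_simp <;> ring
    linarith
  -- choose M
  obtain ⟨D0, hD0def⟩ : ∃ D0 : ℝ, D0 = (1-μt) + |1 - EF| + 1 := ⟨_, rfl⟩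
  have hD0 : 0 < D0 := by rw [hD0def]; have := abs_nonneg (1 - EF); linarith
  obtain ⟨A, hAdef⟩ : ∃ A : ℝ, A = 2*Real.sqrt ((1-μ)⁻¹*(1+|μ|)) := ⟨_, rfl⟩
  have hA0 : 0 ≤ A := by rw [hAdef]; positivity
  obtain ⟨M, hMdef⟩ : ∃ M : ℝ,
      M = max (1+|μ|) (max ((16*A*D0/ε)^2) (16 * |Real.log ηq| * D0/ε)) := ⟨_, rfl⟩
  have hMlb : 1+|μ| ≤ M := hMdef ▸ le_max_left _ _
  have hM0 : (0:ℝ) ≤ M := by linarith [abs_nonneg μ]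
  have hM1 : (0:ℝ) < 1 + M := by linarith
  have hcM8 : st10_cM μ ηq M ≤ ε/(8*D0) := by
    have hsM : Real.sqrt (1+M) > 0 := Real.sqrt_pos.2 hM1
    have hterm1 : 2*Real.sqrt ((1-μ)⁻¹*(1+|μ|)) / Real.sqrt (1+M) ≤ ε/(16*D0) := by
      rw [div_le_div_iff₀ hsM (by positivity)]
      have h1 : (16*A*D0/ε)^2 ≤ M := le_trans (le_max_left _ _) (hMdef ▸ le_max_right _ _)
      have h2 : 16*A*D0/ε ≤ Real.sqrt (1+M) := by
        have := Real.sqrt_le_sqrt (show (16*A*D0/ε)^2 ≤ 1+M by linarith)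
        rwa [Real.sqrt_sq (by positivity)] at this
      rw [div_le_iff₀ hε] at h2
      rw [← hAdef]
      nlinarith
    have hterm2 : |Real.log ηq| / (1+M) ≤ ε/(16*D0) := by
      rw [div_le_div_iff₀ hM1 (by positivity)]
      have h1 : 16 * |Real.log ηq| * D0/ε ≤ M :=
        le_trans (le_max_right _ _) (hMdef ▸ le_max_right _ _)
      rw [div_le_iff₀ hε] at h1
      nlinarith [abs_nonneg (Real.log ηq)]
    rw [st10_cM]
    have heq : ε/(16*D0) + ε/(16*D0) = ε/(8*D0) := by ring
    linarith
  have hcM0 : 0 ≤ st10_cM μ ηq M := st10_cM_nonneg μ ηq M hM0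
  have hcMD0 : st10_cM μ ηq M * D0 ≤ ε/8 := by
    have h1 : st10_cM μ ηq M * D0 ≤ (ε/(8*D0)) * D0 :=
      mul_le_mul_of_nonneg_right hcM8 hD0.le
    have h2 : (ε/(8*D0)) * D0 = ε/8 := by field_simp <;> ring
    linarith
  have htF : st10_cM μ ηq M * (1 - ∫ x, x ∂F) ≤ ε/8 := by
    have h1 : 1 - ∫ x, x ∂F ≤ D0 := by
      rw [hD0def, ← hEF]
      have := le_abs_self (1 - EF)
      linarith
    have := mul_le_mul_of_nonneg_left h1 hcM0
    linarith
  -- choose τ, n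
  obtain ⟨τ, hτdef⟩ : ∃ τ : ℝ, τ = ε/16 := ⟨_, rfl⟩
  have hτ0 : 0 < τ := by rw [hτdef]; positivity
  obtain ⟨K, hKdef⟩ : ∃ K : ℝ, K = (1-μ)⁻¹/ηq := ⟨_, rfl⟩
  have hK0 : 0 ≤ K := by rw [hKdef]; positivity
  obtain ⟨n, hndef⟩ : ∃ n : ℕ, n = ⌈K*(1+M)/τ⌉₊ + 1 := ⟨_, rfl⟩
  have hn : 0 < n := by omega
  have hn0 : (0:ℝ) < (n:ℝ) := by exact_mod_cast hn
  have hgrid : (1-μ)⁻¹/ηq * ((1+M)/n) ≤ τ := by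
    rw [← hKdef]
    have h1 : K*(1+M)/τ ≤ (n:ℝ) := by
      have h2 : K*(1+M)/τ ≤ (⌈K*(1+M)/τ⌉₊:ℝ) := Nat.le_ceil _
      have h3 : ((⌈K*(1+M)/τ⌉₊:ℕ):ℝ) ≤ (n:ℝ) := by
        rw [hndef]; push_cast; linarith
      linarith
    rw [div_le_iff₀ hτ0] at h1
    have h4 : K * ((1+M)/n) = K*(1+M)/n := by ring
    rw [h4, div_le_iff₀ hn0]
    linarith [mul_comm τ (n:ℝ) ▸ h1]
  -- bound B
  obtain ⟨B, hBdef⟩ : ∃ B : ℝ, B = 2*(|Real.log ηq| + (1-μ)⁻¹*(M+|μ|+1)) := ⟨_, rfl⟩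
  have hB0 : 0 ≤ B := by
    rw [hBdef]
    have : (0:ℝ) ≤ (1-μ)⁻¹*(M+|μ|+1) := by positivity
    positivity
  -- choose δ
  obtain ⟨δ, hδdef⟩ : ∃ δ : ℝ, δ = (min ((1+M)/n) (ε/(16*(B+1))))/2 := ⟨_, rfl⟩
  have hδ0 : 0 < δ := by
    rw [hδdef]
    have h1 : (0:ℝ) < (1+M)/n := by positivity
    have h2 : (0:ℝ) < ε/(16*(B+1)) := by positivity
    have := lt_min h1 h2
    linarith
  refine ⟨δ, hδ0, ?_⟩
  intro G hG hsG hiG hμtG hlevy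
  have hCG : ∀ ν', 0 ≤ ν' → ν' ≤ (1-μ)⁻¹ → ν' * (μ - ∫ x, x ∂G) ≤ C := by
    intro ν' h0 h1
    refine hboundC (μ - ∫ x, x ∂G) ?_ ν' h0 h1
    have := le_abs_self μ
    have := neg_abs_le μt
    have := abs_nonneg EF
    linarith
  have htG : st10_cM μ ηq M * (1 - ∫ x, x ∂G) ≤ ε/8 := by
    have h1 : 1 - ∫ x, x ∂G ≤ D0 := by
      rw [hD0def]
      have := abs_nonneg (1 - EF)
      linarith
    have := mul_le_mul_of_nonneg_left h1 hcM0
    linarith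
  -- extract h from the Lévy distance bound
  have h2S : (2:ℝ) ∈ {h : ℝ | 0 < h ∧ ∀ x : ℝ,
      (F (Set.Iic (x - h))).toReal - h ≤ (G (Set.Iic x)).toReal ∧
      (G (Set.Iic x)).toReal ≤ (F (Set.Iic (x + h))).toReal + h} := by
    refine ⟨by norm_num, fun x => ⟨?_, ?_⟩⟩
    · have := st10_toReal_le_one F (Set.Iic (x-2))
      have := ENNReal.toReal_nonneg (a := G (Set.Iic x))
      linarith
    · have := st10_toReal_le_one G (Set.Iic x)
      have := ENNReal.toReal_nonneg (a := F (Set.Iic (x+2)))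
      linarith
  have hbdd : BddBelow {h : ℝ | 0 < h ∧ ∀ x : ℝ,
      (F (Set.Iic (x - h))).toReal - h ≤ (G (Set.Iic x)).toReal ∧
      (G (Set.Iic x)).toReal ≤ (F (Set.Iic (x + h))).toReal + h} :=
    ⟨0, fun h hh => hh.1.le⟩
  rw [levyDist] at hlevy
  have hlt : sInf {h : ℝ | 0 < h ∧ ∀ x : ℝ,
      (F (Set.Iic (x - h))).toReal - h ≤ (G (Set.Iic x)).toReal ∧
      (G (Set.Iic x)).toReal ≤ (F (Set.Iic (x + h))).toReal + h} < 2*δ :=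
    lt_of_le_of_lt hlevy (by linarith)
  obtain ⟨h, hhS, hh2δ⟩ := (csInf_lt_iff hbdd ⟨2, h2S⟩).1 hlt
  obtain ⟨hh0, hband⟩ := hhS
  have hhmin : h ≤ min ((1+M)/n) (ε/(16*(B+1))) := by
    rw [hδdef] at hh2δ; linarith
  have hhΔ : h ≤ (1+M)/n := hhmin.trans (min_le_left _ _)
  have hhB' : h ≤ ε/(16*(B+1)) := hhmin.trans (min_le_right _ _)
  have hhB : h * B ≤ ε/16 := by
    have h1 : h * B ≤ (ε/(16*(B+1))) * B := mul_le_mul_of_nonneg_right hhB' hB0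
    have h2 : (ε/(16*(B+1))) * B ≤ ε/16 := by
      rw [div_mul_eq_mul_div, div_le_div_iff₀ (by positivity) (by norm_num)]
      nlinarith
    linarith
  -- uniform closeness on the truncated interval
  have hclose : ∀ ν', 0 ≤ ν' → ν' ≤ (1-ηq)*(1-μ)⁻¹ →
      |∫ x, Real.log (1-(x-μ)*ν') ∂F - ∫ x, Real.log (1-(x-μ)*ν') ∂G| ≤ ε/2 := by
    intro ν' h0 h1
    have htailF := st10_tail μ ηq M ν' ε hμ hη0 hη1 hMlb h0 h1 F hsupp hiF htF
    have htailG := st10_tail μ ηq M ν' ε hμ hη0 hη1 hMlb h0 h1 G hsG hiG htG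
    have hmid := st10_mid μ ηq M τ h n hμ hη0 hη1 hMlb ν' h0 h1 hn hgrid hτ0 hh0 hhΔ
      F G hsupp hsG hiF hiG hband
    rw [← hBdef] at hmid
    have h2τ : 2*τ = ε/8 := by rw [hτdef]; ring
    have habs1 := abs_sub_le (∫ x, Real.log (1-(x-μ)*ν') ∂F) (∫ x, st10_g μ ν' M x ∂F)
      (∫ x, Real.log (1-(x-μ)*ν') ∂G)
    have habs2 := abs_sub_le (∫ x, st10_g μ ν' M x ∂F) (∫ x, st10_g μ ν' M x ∂G)
      (∫ x, Real.log (1-(x-μ)*ν') ∂G)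
    have habs3' : |∫ x, st10_g μ ν' M x ∂G - ∫ x, Real.log (1-(x-μ)*ν') ∂G| =
        |∫ x, Real.log (1-(x-μ)*ν') ∂G - ∫ x, st10_g μ ν' M x ∂G| := abs_sub_comm _ _
    calc |∫ x, Real.log (1-(x-μ)*ν') ∂F - ∫ x, Real.log (1-(x-μ)*ν') ∂G|
        ≤ |∫ x, Real.log (1-(x-μ)*ν') ∂F - ∫ x, st10_g μ ν' M x ∂F| +
          (|∫ x, st10_g μ ν' M x ∂F - ∫ x, st10_g μ ν' M x ∂G| +
           |∫ x, st10_g μ ν' M x ∂G - ∫ x, Real.log (1-(x-μ)*ν') ∂G|) := by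
          linarith
      _ ≤ ε/8 + ((2*τ + h*B) + ε/8) := by
          rw [habs3']
          have := hmid
          linarith
      _ ≤ ε/2 := by rw [h2τ] at *; linarith
  constructor
  · apply st10_half μ ε ηq C hμ hε hη0 hη12 hηC G F hsG hsupp hiG hiF hCG
    intro ν' h0 h1
    rw [abs_sub_comm]
    exact hclose ν' h0 h1
  · exact st10_half μ ε ηq C hμ hε hη0 hη12 hηC F G hsupp hsG hiF hiG hCF hclose
end

section
/- Let F be a probability measure supported in (-∞,1] with finite mean and let μ < 1. Then the function ν ↦ L(ν;F,μ) = ∫ log(1−(x−μ)ν) dF(x) is twice differentiable on the open interval (0, 1/(1−μ)), with first derivative L'(ν;F,μ) = −∫ (x−μ)/(1−(x−μ)ν) dF(x) and second derivative L''(ν;F,μ) = −∫ (x−μ)²/(1−(x−μ)ν)² dF(x). -/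
open MeasureTheory ProbabilityTheory Set Filter
open scoped ENNReal NNReal Classical BoundedContinuousFunction

/-- For `F` supported in `(-∞,1]` with finite mean and `μ < 1`, the
function `ν ↦ L(ν;F,μ) = ∫ log(1-(x-μ)ν) dF` is twice differentiable on
`(0, 1/(1-μ))`, with `L'(ν) = -∫ (x-μ)/(1-(x-μ)ν) dF` and
`L''(ν) = -∫ (x-μ)²/(1-(x-μ)ν)² dF`. -/
theorem stmt12 (F : Measure ℝ) [IsProbabilityMeasure F] (hsupp : F (Set.Ioi 1) = 0)
    (hint : Integrable (fun x : ℝ => x) F) (μ : ℝ) (hμ : μ < 1) :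
    ∀ ν ∈ Set.Ioo (0 : ℝ) (1 - μ)⁻¹,
      HasDerivAt (fun ν' => ∫ x, Real.log (1 - (x - μ) * ν') ∂F)
        (-∫ x, (x - μ) / (1 - (x - μ) * ν) ∂F) ν ∧
      HasDerivAt (fun ν' => -∫ x, (x - μ) / (1 - (x - μ) * ν') ∂F)
        (-∫ x, (x - μ) ^ 2 / (1 - (x - μ) * ν) ^ 2 ∂F) ν := by
  intro ν hν
  obtain ⟨hν0, hν1⟩ := hν
  have hs : (0 : ℝ) < 1 - μ := by linarith
  have hae : ∀ᵐ x ∂F, x ≤ 1 := by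
    have h1 : {x : ℝ | ¬ x ≤ 1} = Set.Ioi 1 := by ext x; simp [not_le]
    rw [ae_iff, h1]; exact hsupp
  set ε : ℝ := min ν ((1 - μ)⁻¹ - ν) / 2 with hεdef
  have hε : 0 < ε := by
    have : 0 < min ν ((1 - μ)⁻¹ - ν) := lt_min hν0 (by linarith)
    positivity
  set a : ℝ := ν - ε with hadef
  set b : ℝ := ν + ε with hbdef
  have ha : 0 < a := by
    have : ε ≤ ν / 2 := by
      rw [hεdef]; have := min_le_left ν ((1 - μ)⁻¹ - ν); linarith
    simp only [hadef]; linarith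
  have hb : b * (1 - μ) < 1 := by
    have h1 : ε ≤ ((1 - μ)⁻¹ - ν) / 2 := by
      rw [hεdef]; have := min_le_right ν ((1 - μ)⁻¹ - ν); linarith
    have h2 : b < (1 - μ)⁻¹ := by simp only [hbdef]; linarith
    calc b * (1 - μ) < (1 - μ)⁻¹ * (1 - μ) := by nlinarith
      _ = 1 := inv_mul_cancel₀ (ne_of_gt hs)
  have hbpos : 0 < b := by positivity
  set δ : ℝ := min (1 - b * (1 - μ)) 1 with hδdef
  have hδ : 0 < δ := lt_min (by linarith) one_pos
  have hδ1 : δ ≤ 1 := min_le_right _ _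
  -- membership in ball
  have hball : ∀ t ∈ Metric.ball ν ε, a < t ∧ t < b := by
    intro t ht
    rw [Metric.mem_ball, Real.dist_eq, abs_lt] at ht
    constructor <;> [simp only [hadef]; simp only [hbdef]] <;> linarith [ht.1, ht.2]
  -- lower bound on denominator
  have key : ∀ x ≤ (1 : ℝ), ∀ t ∈ Metric.ball ν ε, δ ≤ 1 - (x - μ) * t := by
    intro x hx t ht
    obtain ⟨h1, h2⟩ := hball t ht
    rcases le_or_gt μ x with h | h
    · have hxt : (x - μ) * t ≤ (1 - μ) * b :=
        mul_le_mul (by linarith) (le_of_lt h2) (by linarith) (by linarith)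
      have := min_le_left (1 - b * (1 - μ)) 1
      nlinarith
    · have hxt : (x - μ) * t ≤ 0 := mul_nonpos_of_nonpos_of_nonneg (by linarith) (by linarith)
      linarith
  set C : ℝ := max ((1 - μ) / δ) a⁻¹ with hCdef
  have hC0 : 0 ≤ C := le_trans (by positivity) (le_max_right _ _)
  -- uniform bound on the ratio
  have bnd : ∀ x ≤ (1 : ℝ), ∀ t ∈ Metric.ball ν ε, |(x - μ) / (1 - (x - μ) * t)| ≤ C := by
    intro x hx t ht
    obtain ⟨h1, h2⟩ := hball t ht
    have hd : δ ≤ 1 - (x - μ) * t := key x hx t ht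
    have hdpos : 0 < 1 - (x - μ) * t := lt_of_lt_of_le hδ hd
    rw [abs_div, abs_of_pos hdpos]
    rcases le_or_gt μ x with h | h
    · refine le_trans ?_ (le_max_left _ _)
      rw [abs_of_nonneg (by linarith : (0:ℝ) ≤ x - μ)]
      exact div_le_div₀ (by linarith) (by linarith) hδ hd
    · refine le_trans ?_ (le_max_right _ _)
      rw [abs_of_neg (by linarith : x - μ < 0)]
      rw [div_le_iff₀ hdpos, inv_mul_eq_div, le_div_iff₀ ha]
      nlinarith
  -- pointwise derivatives
  have hder1 : ∀ (x : ℝ), ∀ t ∈ Metric.ball ν ε, x ≤ 1 →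
      HasDerivAt (fun t => Real.log (1 - (x - μ) * t))
        (-((x - μ) / (1 - (x - μ) * t))) t := by
    intro x t ht hx
    have hdpos : 0 < 1 - (x - μ) * t := lt_of_lt_of_le hδ (key x hx t ht)
    have h0 : HasDerivAt (fun t : ℝ => 1 - (x - μ) * t) (-(x - μ)) t := by
      simpa using ((hasDerivAt_id t).const_mul (x - μ)).const_sub 1
    have h2 := h0.log (ne_of_gt hdpos)
    convert h2 using 1
    rw [neg_div]
  have hder2 : ∀ (x : ℝ), ∀ t ∈ Metric.ball ν ε, x ≤ 1 →
      HasDerivAt (fun t => (x - μ) / (1 - (x - μ) * t))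
        ((x - μ) ^ 2 / (1 - (x - μ) * t) ^ 2) t := by
    intro x t ht hx
    have hdpos : 0 < 1 - (x - μ) * t := lt_of_lt_of_le hδ (key x hx t ht)
    have h0 : HasDerivAt (fun t : ℝ => 1 - (x - μ) * t) (-(x - μ)) t := by
      simpa using ((hasDerivAt_id t).const_mul (x - μ)).const_sub 1
    have := (hasDerivAt_const t (x - μ)).div h0 (ne_of_gt hdpos)
    convert this using 1 <;> try rfl
    field_simp
    ring
  -- measurability helpers
  have hmeas1 : ∀ t : ℝ, AEStronglyMeasurable (fun x => Real.log (1 - (x - μ) * t)) F := by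
    intro t
    exact (Real.measurable_log.comp
      (measurable_const.sub ((measurable_id.sub measurable_const).mul_const t))).aestronglyMeasurable
  have hmeas2 : ∀ t : ℝ, AEStronglyMeasurable (fun x => (x - μ) / (1 - (x - μ) * t)) F := by
    intro t
    exact ((measurable_id.sub measurable_const).div
      (measurable_const.sub ((measurable_id.sub measurable_const).mul_const t))).aestronglyMeasurable
  -- integrability of log at ν
  have hint1 : Integrable (fun x => Real.log (1 - (x - μ) * ν)) F := by
    refine Integrable.mono' (g := fun x => |Real.log δ| + b * |x - μ|)
      ((integrable_const _).add (((hint.sub (integrable_const μ)).abs.const_mul b)))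
      (hmeas1 ν) ?_
    filter_upwards [hae] with x hx
    have hd : δ ≤ 1 - (x - μ) * ν := key x hx ν (Metric.mem_ball_self hε)
    have hdpos : 0 < 1 - (x - μ) * ν := lt_of_lt_of_le hδ hd
    rw [Real.norm_eq_abs, abs_le]
    constructor
    · have h1 : Real.log δ ≤ Real.log (1 - (x - μ) * ν) := Real.log_le_log hδ hd
      have h2 : -|Real.log δ| ≤ Real.log δ := neg_abs_le _
      have h3 : 0 ≤ b * |x - μ| := by positivity
      linarith
    · have h1 : Real.log (1 - (x - μ) * ν) ≤ (1 - (x - μ) * ν) - 1 :=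
        Real.log_le_sub_one_of_pos hdpos
      have h2 : -(x - μ) * ν ≤ |x - μ| * b := by
        calc -(x - μ) * ν ≤ |x - μ| * ν := by
              have := neg_abs_le (x - μ); nlinarith [abs_nonneg (x - μ)]
          _ ≤ |x - μ| * b := by
              have := hball ν (Metric.mem_ball_self hε)
              nlinarith [abs_nonneg (x - μ)]
      have h3 : 0 ≤ |Real.log δ| := abs_nonneg _
      nlinarith
  -- first derivative
  have H1 := hasDerivAt_integral_of_dominated_loc_of_deriv_le (μ := F)
    (F := fun t x => Real.log (1 - (x - μ) * t))
    (F' := fun t x => -((x - μ) / (1 - (x - μ) * t)))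
    (bound := fun _ => C) (Metric.ball_mem_nhds ν hε)
    (Eventually.of_forall fun t => hmeas1 t) hint1
    ((hmeas2 ν).neg)
    (by filter_upwards [hae] with x hx t ht
        rw [norm_neg, Real.norm_eq_abs]; exact bnd x hx t ht)
    (integrable_const C)
    (by filter_upwards [hae] with x hx t ht; exact hder1 x t ht hx)
  -- integrability of the ratio at ν
  have hint2 : Integrable (fun x => (x - μ) / (1 - (x - μ) * ν)) F := by
    refine Integrable.mono' (g := fun _ => C) (integrable_const C) (hmeas2 ν) ?_
    filter_upwards [hae] with x hx
    exact bnd x hx ν (Metric.mem_ball_self hε)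
  -- second derivative
  have H2 := hasDerivAt_integral_of_dominated_loc_of_deriv_le (μ := F)
    (F := fun t x => (x - μ) / (1 - (x - μ) * t))
    (F' := fun t x => (x - μ) ^ 2 / (1 - (x - μ) * t) ^ 2)
    (bound := fun _ => C ^ 2) (Metric.ball_mem_nhds ν hε)
    (Eventually.of_forall fun t => hmeas2 t) hint2
    ((((measurable_id.sub measurable_const).pow_const 2).div
      ((measurable_const.sub ((measurable_id.sub measurable_const).mul_const ν)).pow_const 2)).aestronglyMeasurable)
    (by filter_upwards [hae] with x hx t ht
        have h1 := bnd x hx t ht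
        rw [Real.norm_eq_abs]
        calc |(x - μ) ^ 2 / (1 - (x - μ) * t) ^ 2|
            = |((x - μ) / (1 - (x - μ) * t)) ^ 2| := by rw [div_pow]
          _ = |(x - μ) / (1 - (x - μ) * t)| ^ 2 := by rw [abs_pow]
          _ ≤ C ^ 2 := pow_le_pow_left₀ (abs_nonneg _) h1 2)
    (integrable_const _)
    (by filter_upwards [hae] with x hx t ht; exact hder2 x t ht hx)
  refine ⟨?_, H2.2.neg⟩
  have := H1.2
  rwa [integral_neg] at this
end

section
/- Let F be a probability measure supported in (-∞,1] with finite mean, assume E(F) ≤ μ < 1, let ν* ∈ [0, 1/(1−μ)] satisfy ∫ 1/(1−(x−μ)ν*) dF(x) ≤ 1, and set Y = 1−(X−μ)ν* where X has distribution F (so Y > 0 F-almost surely). Then E[Y^λ] ≤ 1 for every λ ∈ [−1,0], and E[Y^λ] ≤ (1−E(F))/(1−μ) for every λ ∈ (0,1]. -/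
open MeasureTheory ProbabilityTheory Set Filter
open scoped ENNReal NNReal Classical BoundedContinuousFunction

/-- Let `F` be supported in `(-∞,1]` with finite mean,
`E(F) ≤ μ < 1`, and let `ν* ∈ [0,1/(1-μ)]` satisfy `∫ 1/(1-(x-μ)ν*) dF ≤ 1`.
With `Y = 1-(X-μ)ν*`: `E[Y^λ] ≤ 1` for `λ ∈ [-1,0]`, and
`E[Y^λ] ≤ (1-E(F))/(1-μ)` for `λ ∈ (0,1]`. -/
theorem stmt14 (F : Measure ℝ) [IsProbabilityMeasure F] (hsupp : F (Set.Ioi 1) = 0)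
    (hint : Integrable (fun x : ℝ => x) F) (μ : ℝ) (hEF : ∫ x, x ∂F ≤ μ) (hμ : μ < 1)
    (ν' : ℝ) (hmem : ν' ∈ Set.Icc (0 : ℝ) (1 - μ)⁻¹)
    (hinv : ∫⁻ x, (ENNReal.ofReal (1 - (x - μ) * ν'))⁻¹ ∂F ≤ 1) :
    (∀ l ∈ Set.Icc (-1 : ℝ) 0, ∫ x, (1 - (x - μ) * ν') ^ l ∂F ≤ 1) ∧
    (∀ l ∈ Set.Ioc (0 : ℝ) 1,
      ∫ x, (1 - (x - μ) * ν') ^ l ∂F ≤ (1 - ∫ x, x ∂F) / (1 - μ)) := by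
  obtain ⟨hν0, hν1⟩ := hmem
  have h1m : (0:ℝ) < 1 - μ := by linarith
  set Y : ℝ → ℝ := fun x => 1 - (x - μ) * ν' with hYdef
  have hYmeas : Measurable Y := by
    apply Measurable.sub measurable_const
    exact (measurable_id.sub measurable_const).mul measurable_const
  -- Y > 0 a.e.
  have hSnull : F {x | Y x ≤ 0} = 0 := by
    by_contra h
    have hmeasS : MeasurableSet {x | Y x ≤ 0} := measurableSet_le hYmeas measurable_const
    have h1 : ∫⁻ x in {x | Y x ≤ 0}, (ENNReal.ofReal (Y x))⁻¹ ∂F ≤ 1 :=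
      le_trans (setLIntegral_le_lintegral _ _) hinv
    have h2 : ∫⁻ x in {x | Y x ≤ 0}, (ENNReal.ofReal (Y x))⁻¹ ∂F = ⊤ := by
      rw [setLIntegral_congr_fun hmeasS ((fun x hx => by
        simp only [Set.mem_setOf_eq] at hx
        rw [ENNReal.ofReal_of_nonpos hx, ENNReal.inv_zero]))]
      simp [lintegral_const, h]
    rw [h2] at h1
    exact absurd h1 (by simp)
  have hYpos : ∀ᵐ x ∂F, 0 < Y x := by
    rw [ae_iff]
    simpa only [not_lt] using hSnull
  -- Y⁻¹ integrable with integral ≤ 1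
  have hlint : ∫⁻ x, ENNReal.ofReal ((Y x)⁻¹) ∂F ≤ 1 := by
    refine le_trans (le_of_eq (lintegral_congr_ae ?_)) hinv
    filter_upwards [hYpos] with x hx
    rw [ENNReal.ofReal_inv_of_pos hx]
  have hinvInt : Integrable (fun x => (Y x)⁻¹) F := by
    refine ⟨(hYmeas.inv).aestronglyMeasurable, ?_⟩
    rw [hasFiniteIntegral_iff_norm]
    calc ∫⁻ x, ENNReal.ofReal ‖(Y x)⁻¹‖ ∂F
        = ∫⁻ x, ENNReal.ofReal ((Y x)⁻¹) ∂F := by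
          refine lintegral_congr_ae ?_
          filter_upwards [hYpos] with x hx
          rw [Real.norm_eq_abs, abs_of_pos (inv_pos.2 hx)]
      _ ≤ 1 := hlint
      _ < ⊤ := ENNReal.one_lt_top
  have hinvIntle : ∫ x, (Y x)⁻¹ ∂F ≤ 1 := by
    rw [integral_eq_lintegral_of_nonneg_ae (f := fun x => (Y x)⁻¹)
      (by filter_upwards [hYpos] with x hx; exact (inv_pos.2 hx).le)
      (hYmeas.inv).aestronglyMeasurable]
    calc (∫⁻ x, ENNReal.ofReal ((Y x)⁻¹) ∂F).toReal
        ≤ (1 : ℝ≥0∞).toReal := ENNReal.toReal_mono (by simp) hlint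
      _ = 1 := by simp
  constructor
  · rintro l ⟨hl1, hl0⟩
    have hg : Integrable (fun x => (-l) * (Y x)⁻¹ + (1 + l)) F :=
      (hinvInt.const_mul _).add (integrable_const _)
    have hbound : ∀ᵐ x ∂F, (Y x) ^ l ≤ (-l) * (Y x)⁻¹ + (1 + l) := by
      filter_upwards [hYpos] with x hx
      have key := Real.geom_mean_le_arith_mean2_weighted (neg_nonneg.2 hl0)
        (by linarith : (0:ℝ) ≤ 1 + l) (inv_pos.2 hx).le zero_le_one
        (by ring : -l + (1 + l) = 1)
      rw [Real.one_rpow, mul_one, mul_one] at key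
      calc (Y x) ^ l = ((Y x)⁻¹) ^ (-l) := by
            rw [Real.rpow_neg (inv_pos.2 hx).le, Real.inv_rpow hx.le, inv_inv]
        _ ≤ -l * (Y x)⁻¹ + (1 + l) := key
    have hYlnn : ∀ᵐ x ∂F, 0 ≤ (Y x) ^ l := by
      filter_upwards [hYpos] with x hx
      exact (Real.rpow_pos_of_pos hx l).le
    have hYlInt : Integrable (fun x => (Y x) ^ l) F := by
      refine hg.mono ((hYmeas.pow_const l).aestronglyMeasurable) ?_
      filter_upwards [hbound, hYlnn, hYpos] with x h1 h2 h3
      rw [Real.norm_eq_abs, Real.norm_eq_abs, abs_of_nonneg h2, abs_of_nonneg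
        (add_nonneg (mul_nonneg (neg_nonneg.2 hl0) (inv_pos.2 h3).le) (by linarith))]
      exact h1
    calc ∫ x, (Y x) ^ l ∂F ≤ ∫ x, ((-l) * (Y x)⁻¹ + (1 + l)) ∂F :=
          integral_mono_ae hYlInt hg hbound
      _ = (-l) * ∫ x, (Y x)⁻¹ ∂F + (1 + l) := by
          rw [integral_add (hinvInt.const_mul _) (integrable_const _),
            integral_const_mul, integral_const]
          simp
      _ ≤ (-l) * 1 + (1 + l) := by
          have := mul_le_mul_of_nonneg_left hinvIntle (neg_nonneg.2 hl0)
          linarith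
      _ = 1 := by ring
  · rintro l ⟨hl0, hl1⟩
    have hYInt : Integrable Y F := by
      have : Integrable (fun x : ℝ => (x - μ) * ν') F :=
        (hint.sub (integrable_const μ)).mul_const ν'
      exact (integrable_const (1:ℝ)).sub this
    have hsubInt : Integrable (fun x : ℝ => (x - μ) * ν') F := by
      simpa using (hint.sub (integrable_const μ)).mul_const ν'
    have hEY : ∫ x, Y x ∂F = 1 - ((∫ x, x ∂F) - μ) * ν' := by
      have h2 : ∫ x, (x - μ) ∂F = (∫ x, x ∂F) - μ := by
        have := integral_sub hint (integrable_const (μ:ℝ)) (μ := F)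
        simpa [integral_const] using this
      have h3 : ∫ x, (x - μ) * ν' ∂F = ((∫ x, x ∂F) - μ) * ν' := by
        rw [integral_mul_const, h2]
      calc ∫ x, Y x ∂F = ∫ x, (1 - (x - μ) * ν') ∂F := rfl
        _ = (∫ _x, (1:ℝ) ∂F) - ∫ x, (x - μ) * ν' ∂F :=
            integral_sub (integrable_const 1) hsubInt
        _ = 1 - ((∫ x, x ∂F) - μ) * ν' := by rw [h3]; simp
    have hg : Integrable (fun x => l * Y x + (1 - l)) F :=
      (hYInt.const_mul _).add (integrable_const _)
    have hbound : ∀ᵐ x ∂F, (Y x) ^ l ≤ l * Y x + (1 - l) := by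
      filter_upwards [hYpos] with x hx
      have key := Real.geom_mean_le_arith_mean2_weighted hl0.le
        (by linarith : (0:ℝ) ≤ 1 - l) hx.le zero_le_one
        (by ring : l + (1 - l) = 1)
      rw [Real.one_rpow, mul_one, mul_one] at key
      exact key
    have hYlInt : Integrable (fun x => (Y x) ^ l) F := by
      refine hg.mono ((hYmeas.pow_const l).aestronglyMeasurable) ?_
      filter_upwards [hbound, hYpos] with x h1 h3
      rw [Real.norm_eq_abs, Real.norm_eq_abs, abs_of_nonneg (Real.rpow_pos_of_pos h3 l).le,
        abs_of_nonneg (add_nonneg (mul_nonneg hl0.le h3.le) (by linarith))]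
      exact h1
    have hEYle : ∫ x, Y x ∂F ≤ (1 - ∫ x, x ∂F) / (1 - μ) := by
      rw [hEY]
      have hb : (μ - ∫ x, x ∂F) * ν' ≤ (μ - ∫ x, x ∂F) * (1 - μ)⁻¹ :=
        mul_le_mul_of_nonneg_left hν1 (by linarith)
      rw [div_eq_mul_inv]
      have : (1 - ∫ x, x ∂F) * (1 - μ)⁻¹ = 1 + (μ - ∫ x, x ∂F) * (1 - μ)⁻¹ := by
        have hne : (1 - μ) ≠ 0 := ne_of_gt h1m
        field_simp
        ring
      rw [this]
      linarith
    have hR1 : (1:ℝ) ≤ (1 - ∫ x, x ∂F) / (1 - μ) := by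
      rw [le_div_iff₀ h1m]; linarith
    calc ∫ x, (Y x) ^ l ∂F ≤ ∫ x, (l * Y x + (1 - l)) ∂F :=
          integral_mono_ae hYlInt hg hbound
      _ = l * ∫ x, Y x ∂F + (1 - l) := by
          rw [integral_add (hYInt.const_mul _) (integrable_const _),
            integral_const_mul, integral_const]
          simp
      _ ≤ (1 - ∫ x, x ∂F) / (1 - μ) := by
          nlinarith [mul_le_mul_of_nonneg_left hEYle hl0.le]
end

section
/- Let F be a probability measure supported in (-∞,1] with finite mean, assume E(F) ≤ μ < 1, let ν* ∈ [0, 1/(1−μ)] satisfy ∫ 1/(1−(x−μ)ν*) dF(x) ≤ 1, and set Y = 1−(X−μ)ν* where X has distribution F. Then for every c0 ≥ 2.163 and every λ ∈ [−1/2, 0], E[Y^λ (log Y)²] ≤ c0 + (1−E(F))/(1−μ). -/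
open MeasureTheory ProbabilityTheory Set Filter
open scoped ENNReal NNReal Classical BoundedContinuousFunction

lemma aux_le_exp (u : ℝ) : u ≤ Real.exp (u - 1) := by
  have := Real.add_one_le_exp (u - 1); linarith

lemma aux_sq_le_exp1 (t : ℝ) (ht : 0 ≤ t) : t ^ 2 ≤ 16 * Real.exp (t / 2 - 2) := by
  have h := aux_le_exp (t / 4)
  have he : Real.exp (t / 2 - 2) = Real.exp (t / 4 - 1) * Real.exp (t / 4 - 1) := by
    rw [← Real.exp_add]; ring_nf
  nlinarith [Real.exp_pos (t / 4 - 1)]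

lemma aux_sq_le_exp2 (t : ℝ) (ht : 0 ≤ t) : t ^ 2 ≤ 4 * Real.exp (t - 2) := by
  have h := aux_le_exp (t / 2)
  have he : Real.exp (t - 2) = Real.exp (t / 2 - 1) * Real.exp (t / 2 - 1) := by
    rw [← Real.exp_add]; ring_nf
  nlinarith [Real.exp_pos (t / 2 - 1)]

lemma aux_pointwise (y l : ℝ) (hy : 0 < y) (hl1 : -(1 / 2) ≤ l) (hl2 : l ≤ 0) :
    y ^ l * Real.log y ^ 2 ≤ 16 * Real.exp (-2) * y⁻¹ + 4 * Real.exp (-2) * y := by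
  have hrpow : y ^ l = Real.exp (Real.log y * l) := Real.rpow_def_of_pos hy l
  rcases le_or_gt y 1 with h1 | h1
  · set t : ℝ := -Real.log y with ht
    have htnn : 0 ≤ t := by
      have := Real.log_nonpos hy.le h1; simp only [ht]; linarith
    have hyi : y⁻¹ = Real.exp t := by
      rw [ht, Real.exp_neg, Real.exp_log hy]
    have hyl : y ^ l ≤ Real.exp (t / 2) := by
      rw [hrpow]
      apply Real.exp_le_exp.2
      nlinarith
    have hlog : Real.log y ^ 2 ≤ 16 * Real.exp (t / 2 - 2) := by
      have h2 : Real.log y ^ 2 = t ^ 2 := by rw [ht]; ring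
      rw [h2]; exact aux_sq_le_exp1 t htnn
    have hmul : y ^ l * Real.log y ^ 2 ≤ Real.exp (t / 2) * (16 * Real.exp (t / 2 - 2)) :=
      mul_le_mul hyl hlog (sq_nonneg _) (Real.exp_pos _).le
    have heq : Real.exp (t / 2) * (16 * Real.exp (t / 2 - 2)) = 16 * Real.exp (-2) * y⁻¹ := by
      have h5 : Real.exp (t / 2) * Real.exp (t / 2 - 2) = Real.exp (-2) * Real.exp t := by
        rw [← Real.exp_add, ← Real.exp_add]
        congr 1
        ring
      rw [hyi]
      nlinarith [h5]
    have h4 : 0 ≤ 4 * Real.exp (-2) * y := by positivity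
    linarith [hmul, heq ▸ hmul]
  · set t : ℝ := Real.log y with ht
    have htnn : 0 ≤ t := Real.log_nonneg h1.le
    have hye : Real.exp t = y := Real.exp_log hy
    have hyl : y ^ l ≤ 1 := by
      rw [hrpow, ← Real.exp_zero]
      exact Real.exp_le_exp.2 (mul_nonpos_of_nonneg_of_nonpos htnn hl2)
    have hlog : Real.log y ^ 2 ≤ 4 * Real.exp (-2) * y := by
      have := aux_sq_le_exp2 t htnn
      have heq : Real.exp (t - 2) = Real.exp (-2) * y := by
        rw [← hye, ← Real.exp_add]; ring_nf
      rw [heq] at this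
      calc Real.log y ^ 2 = t ^ 2 := by rw [ht]
        _ ≤ 4 * (Real.exp (-2) * y) := this
        _ = 4 * Real.exp (-2) * y := by ring
    have hmul : y ^ l * Real.log y ^ 2 ≤ 1 * (4 * Real.exp (-2) * y) :=
      mul_le_mul hyl hlog (sq_nonneg _) one_pos.le
    have h16 : 0 ≤ 16 * Real.exp (-2) * y⁻¹ := by positivity
    linarith

/-- In the setting of Lemma `lem_integrable`'s maximizer: with
`Y = 1-(X-μ)ν*`, for every `c0 ≥ 2.163` and `λ ∈ [-1/2,0]`,
`E[Y^λ (log Y)²] ≤ c0 + (1-E(F))/(1-μ)`. -/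
theorem stmt15 (F : Measure ℝ) [IsProbabilityMeasure F] (hsupp : F (Set.Ioi 1) = 0)
    (hint : Integrable (fun x : ℝ => x) F) (μ : ℝ) (hEF : ∫ x, x ∂F ≤ μ) (hμ : μ < 1)
    (ν' : ℝ) (hmem : ν' ∈ Set.Icc (0 : ℝ) (1 - μ)⁻¹)
    (hinv : ∫⁻ x, (ENNReal.ofReal (1 - (x - μ) * ν'))⁻¹ ∂F ≤ 1) :
    ∀ c0 : ℝ, 2.163 ≤ c0 → ∀ l ∈ Set.Icc (-(1 / 2) : ℝ) 0,
      ∫ x, (1 - (x - μ) * ν') ^ l * (Real.log (1 - (x - μ) * ν')) ^ 2 ∂F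
        ≤ c0 + (1 - ∫ x, x ∂F) / (1 - μ) := by
  intro c0 hc0 l hl
  obtain ⟨hl1, hl2⟩ := hl
  obtain ⟨hν0, hν1⟩ := hmem
  have hμ' : (0 : ℝ) < 1 - μ := by linarith
  set Y : ℝ → ℝ := fun x => 1 - (x - μ) * ν' with hYD
  have hYmeas : Measurable Y :=
    measurable_const.sub ((measurable_id.sub_const μ).mul_const ν')
  have hGmeas : Measurable fun x => (ENNReal.ofReal (Y x))⁻¹ :=
    (ENNReal.measurable_ofReal.comp hYmeas).inv
  have hinvne : ∫⁻ x, (ENNReal.ofReal (Y x))⁻¹ ∂F ≠ ⊤ :=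
    (lt_of_le_of_lt hinv (by norm_num)).ne
  have hpos : ∀ᵐ x ∂F, 0 < Y x := by
    have h := ae_lt_top hGmeas hinvne
    filter_upwards [h] with x hx
    by_contra hle
    push_neg at hle
    rw [ENNReal.ofReal_eq_zero.2 hle] at hx
    simp at hx
  have hsub : Integrable (fun x : ℝ => x - μ) F := hint.sub (integrable_const μ)
  have hsub2 : Integrable (fun x : ℝ => (x - μ) * ν') F := hsub.mul_const ν'
  have hYint : Integrable Y F := (integrable_const (1 : ℝ)).sub hsub2
  have hEY : ∫ x, Y x ∂F = 1 - (∫ x, x ∂F - μ) * ν' := by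
    show ∫ x, (1 - (x - μ) * ν') ∂F = _
    rw [integral_sub (integrable_const 1) hsub2, integral_const, integral_mul_const,
      integral_sub hint (integrable_const μ), integral_const]
    simp
  have hIinv : Integrable (fun x => (Y x)⁻¹) F := by
    have h := integrable_toReal_of_lintegral_ne_top hGmeas.aemeasurable hinvne
    apply h.congr
    filter_upwards [hpos] with x hx
    rw [← ENNReal.ofReal_inv_of_pos hx, ENNReal.toReal_ofReal (inv_nonneg.2 hx.le)]
  have hIinv_le : ∫ x, (Y x)⁻¹ ∂F ≤ 1 := by
    rw [integral_eq_lintegral_of_nonneg_ae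
      (by filter_upwards [hpos] with x hx; positivity) hIinv.1]
    have heq : ∫⁻ x, ENNReal.ofReal ((Y x)⁻¹) ∂F = ∫⁻ x, (ENNReal.ofReal (Y x))⁻¹ ∂F :=
      lintegral_congr_ae (by
        filter_upwards [hpos] with x hx
        rw [ENNReal.ofReal_inv_of_pos hx])
    rw [heq]
    calc (∫⁻ x, (ENNReal.ofReal (Y x))⁻¹ ∂F).toReal ≤ (1 : ℝ≥0∞).toReal :=
          ENNReal.toReal_mono (by norm_num) hinv
      _ = 1 := by norm_num
  set k := Real.exp (-2) with hkD
  have hk0 : 0 < k := Real.exp_pos _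
  have hkb : k ≤ 0.136 := by
    have h1 := Real.exp_one_gt_d9
    have h2 : Real.exp 2 = Real.exp 1 * Real.exp 1 := by
      rw [← Real.exp_add]; norm_num
    have h3 : (7.389 : ℝ) ≤ Real.exp 2 := by nlinarith
    have h4 : Real.exp (-2) = (Real.exp 2)⁻¹ := by
      rw [← Real.exp_neg]
    rw [hkD, h4]
    rw [inv_le_comm₀ (by linarith) (by norm_num)]
    calc (0.136 : ℝ)⁻¹ ≤ 7.36 := by norm_num
      _ ≤ Real.exp 2 := by linarith
  have hg_int : Integrable (fun x => 16 * k * (Y x)⁻¹ + 4 * k * Y x) F :=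
    (hIinv.const_mul _).add (hYint.const_mul _)
  have hf_meas : AEStronglyMeasurable (fun x => Y x ^ l * Real.log (Y x) ^ 2) F := by
    have hg : Measurable fun x => Real.exp (Real.log (Y x) * l) * Real.log (Y x) ^ 2 :=
      (Real.measurable_exp.comp ((Real.measurable_log.comp hYmeas).mul_const l)).mul
        ((Real.measurable_log.comp hYmeas).pow_const 2)
    apply hg.aestronglyMeasurable.congr
    filter_upwards [hpos] with x hx
    rw [Real.rpow_def_of_pos hx]
  have hbound : ∀ᵐ x ∂F, Y x ^ l * Real.log (Y x) ^ 2 ≤ 16 * k * (Y x)⁻¹ + 4 * k * Y x := by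
    filter_upwards [hpos] with x hx
    exact aux_pointwise (Y x) l hx hl1 hl2
  have hf_int : Integrable (fun x => Y x ^ l * Real.log (Y x) ^ 2) F := by
    apply hg_int.mono' hf_meas
    filter_upwards [hpos, hbound] with x hx hb
    rw [Real.norm_eq_abs, abs_of_nonneg (by positivity)]
    exact hb
  have hmain : ∫ x, Y x ^ l * Real.log (Y x) ^ 2 ∂F
      ≤ 16 * k * ∫ x, (Y x)⁻¹ ∂F + 4 * k * ∫ x, Y x ∂F := by
    calc ∫ x, Y x ^ l * Real.log (Y x) ^ 2 ∂F
        ≤ ∫ x, (16 * k * (Y x)⁻¹ + 4 * k * Y x) ∂F :=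
          integral_mono_ae hf_int hg_int hbound
      _ = 16 * k * ∫ x, (Y x)⁻¹ ∂F + 4 * k * ∫ x, Y x ∂F := by
          rw [integral_add (hIinv.const_mul _) (hYint.const_mul _),
            integral_const_mul, integral_const_mul]
  set E := ∫ x, x ∂F with hED
  have hs0 : 0 ≤ μ - E := by linarith
  have hνle : (μ - E) * ν' ≤ (μ - E) / (1 - μ) := by
    rw [div_eq_mul_inv]
    exact mul_le_mul_of_nonneg_left hν1 hs0
  have htarget : (1 - E) / (1 - μ) = 1 + (μ - E) / (1 - μ) := by
    field_simp
    ring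
  have hs : 0 ≤ (μ - E) / (1 - μ) := div_nonneg hs0 hμ'.le
  have hEY' : ∫ x, Y x ∂F ≤ 1 + (μ - E) / (1 - μ) := by
    rw [hEY]
    nlinarith
  show ∫ x, Y x ^ l * Real.log (Y x) ^ 2 ∂F ≤ c0 + (1 - E) / (1 - μ)
  rw [htarget]
  have hIY_lb : -1 ≤ ∫ x, Y x ∂F := by
    have : 0 ≤ ∫ x, Y x ∂F := integral_nonneg_of_ae (by
      filter_upwards [hpos] with x hx; simpa using hx.le)
    linarith
  have hIinv_lb : 0 ≤ ∫ x, (Y x)⁻¹ ∂F :=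
    integral_nonneg_of_ae (by
      filter_upwards [hpos] with x hx; simpa using (inv_nonneg.2 hx.le))
  nlinarith [mul_le_mul_of_nonneg_left hIinv_le (by positivity : (0:ℝ) ≤ 16 * k),
    mul_le_mul_of_nonneg_left hEY' (by positivity : (0:ℝ) ≤ 4 * k),
    mul_nonneg hs (by linarith : (0:ℝ) ≤ 1 - 4 * k)]
end

section
/- Let μ < 1 and μ̃ < 1 be real numbers, let F be a probability measure supported in (-∞,1] with finite mean satisfying E(F) ≥ μ̃, let a ≤ min{0, μ}, and set A = (−∞, a). Then for every ν ∈ [0, 1/(1−μ)]: 0 ≤ ∫_A log( (1−(x−μ)ν)/(1−(a−μ)ν) ) dF(x) ≤ F(A)·log( (1−μ̃)/F(A) ), where the right-hand side is interpreted as 0 when F(A) = 0. -/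
open MeasureTheory ProbabilityTheory Set Filter
open scoped ENNReal NNReal Classical BoundedContinuousFunction

/-- Let `μ, μ̃ < 1`, let `F` be a probability measure supported in
`(-∞,1]` with finite mean `E(F) ≥ μ̃`, let `a ≤ min{0,μ}` and `A = (-∞,a)`. Then for
every `ν ∈ [0,1/(1-μ)]`:
`0 ≤ ∫_A log((1-(x-μ)ν)/(1-(a-μ)ν)) dF ≤ F(A)·log((1-μ̃)/F(A))`
(the right-hand side being `0` when `F(A) = 0`). -/
theorem stmt16 (μ μt : ℝ) (hμ : μ < 1) (hμt : μt < 1)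
    (F : Measure ℝ) [IsProbabilityMeasure F] (hsupp : F (Set.Ioi 1) = 0)
    (hint : Integrable (fun x : ℝ => x) F) (hEF : μt ≤ ∫ x, x ∂F)
    (a : ℝ) (ha : a ≤ min 0 μ) :
    ∀ ν ∈ Set.Icc (0 : ℝ) (1 - μ)⁻¹,
      0 ≤ ∫ x in Set.Iio a, Real.log ((1 - (x - μ) * ν) / (1 - (a - μ) * ν)) ∂F ∧
      ∫ x in Set.Iio a, Real.log ((1 - (x - μ) * ν) / (1 - (a - μ) * ν)) ∂F
        ≤ (F (Set.Iio a)).toReal * Real.log ((1 - μt) / (F (Set.Iio a)).toReal) := by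
  intro ν hν
  obtain ⟨hν0, hν1⟩ := hν
  have h1μ : (0:ℝ) < 1 - μ := by linarith
  have hνμ : ν * (1 - μ) ≤ 1 := by
    have h := mul_le_mul_of_nonneg_right hν1 h1μ.le
    rwa [inv_mul_cancel₀ h1μ.ne'] at h
  have ha0 : a ≤ 0 := le_trans ha (min_le_left _ _)
  have haμ : a ≤ μ := le_trans ha (min_le_right _ _)
  set c : ℝ := 1 - (a - μ) * ν with hc
  have hc1 : 1 ≤ c := by nlinarith
  have hcpos : 0 < c := by linarith
  have hnum : ∀ x ∈ Set.Iio a, c ≤ 1 - (x - μ) * ν := by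
    intro x hx
    have : (x - μ) * ν ≤ (a - μ) * ν :=
      mul_le_mul_of_nonneg_right (by have hxa : x < a := hx; linarith : x - μ ≤ a - μ) hν0
    simp only [hc]; linarith
  have hlog_nonneg : ∀ x ∈ Set.Iio a, 0 ≤ Real.log ((1 - (x - μ) * ν) / c) := by
    intro x hx
    exact Real.log_nonneg ((one_le_div hcpos).mpr (hnum x hx))
  refine ⟨setIntegral_nonneg measurableSet_Iio hlog_nonneg, ?_⟩
  by_cases hp : F (Set.Iio a) = 0
  · rw [hp, Measure.restrict_eq_zero.mpr hp]
    simp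
  set p : ℝ := (F (Set.Iio a)).toReal with hpdef
  have hp0 : 0 < p := ENNReal.toReal_pos hp (measure_ne_top F _)
  have h1μt : (0:ℝ) < 1 - μt := by linarith
  set s : ℝ := (1 - μt) / p with hs
  have hspos : 0 < s := div_pos h1μt hp0
  have hps : p * s = 1 - μt := by
    rw [hs]; field_simp
  set IA : ℝ := ∫ x in Set.Iio a, x ∂F with hIAdef
  have hsum : p + (F (Set.Ici a)).toReal = 1 := by
    have h := measure_add_measure_compl (μ := F) (measurableSet_Iio (a := a))
    rw [compl_Iio] at h
    have h2 := congrArg ENNReal.toReal h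
    rwa [ENNReal.toReal_add (measure_ne_top F _) (measure_ne_top F _), measure_univ,
      ENNReal.toReal_one] at h2
  have hae1 : ∀ᵐ x ∂F, x ≤ 1 := by
    rw [ae_iff]
    convert hsupp using 2
    ext x; simp [not_le]
  have hIci_le : ∫ x in Set.Ici a, x ∂F ≤ 1 - p := by
    have hb : ∫ x in Set.Ici a, x ∂F ≤ ∫ _x in Set.Ici a, (1:ℝ) ∂F :=
      integral_mono_ae hint.restrict (integrable_const 1) (ae_restrict_of_ae hae1)
    rw [integral_const, measureReal_restrict_apply_univ, measureReal_def, smul_eq_mul, mul_one] at hb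
    linarith
  have hsplit : IA + ∫ x in Set.Ici a, x ∂F = ∫ x, x ∂F := by
    rw [hIAdef, ← compl_Iio]
    exact integral_add_compl measurableSet_Iio hint
  have hIA_ge : μt - (1 - p) ≤ IA := by linarith
  have hIA_le : IA ≤ a * p := by
    have hb : IA ≤ ∫ _x in Set.Iio a, (a:ℝ) ∂F :=
      setIntegral_mono_on hint.restrict (integrable_const a) measurableSet_Iio
        (fun x hx => hx.le)
    rw [integral_const, measureReal_restrict_apply_univ, measureReal_def, smul_eq_mul] at hb
    linarith [hb, mul_comm p a]
  have hp_le : p ≤ 1 - μt := by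
    have hap : a * p ≤ 0 := mul_nonpos_of_nonpos_of_nonneg ha0 hp0.le
    linarith
  set J : ℝ := ∫ x in Set.Iio a, (1 - (x - μ) * ν) ∂F with hJdef
  have hf1_int : Integrable (fun x : ℝ => 1 - (x - μ) * ν) (F.restrict (Set.Iio a)) :=
    (integrable_const 1).sub ((hint.restrict.sub (integrable_const μ)).mul_const ν)
  have hJ : J = (1 + μ * ν) * p - ν * IA := by
    have hcongr : ∀ x : ℝ, 1 - (x - μ) * ν = (1 + μ * ν) - ν * x := fun x => by ring
    calc J = ∫ x in Set.Iio a, ((1 + μ * ν) - ν * x) ∂F := by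
            rw [hJdef]; exact integral_congr_ae (ae_of_all _ hcongr)
      _ = (∫ _x in Set.Iio a, (1 + μ * ν : ℝ) ∂F) - ∫ x in Set.Iio a, ν * x ∂F :=
            integral_sub (integrable_const _) (hint.restrict.const_mul ν)
      _ = (1 + μ * ν) * p - ν * IA := by
            rw [integral_const, measureReal_restrict_apply_univ, measureReal_def, smul_eq_mul, integral_const_mul]
            ring
  have hJ_le : J ≤ c * (1 - μt) := by
    rw [hJ, hc]
    nlinarith [mul_nonneg (by linarith : (0:ℝ) ≤ 1 - μt - p)
        (by linarith : (0:ℝ) ≤ 1 - ν * (1 - μ)),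
      mul_nonneg (mul_nonneg (by linarith : (0:ℝ) ≤ -a) hν0) h1μt.le,
      mul_nonneg hν0 (by linarith : (0:ℝ) ≤ IA - (μt - 1 + p))]
  set ψ : ℝ → ℝ := fun x => (1 - (x - μ) * ν) * (c * s)⁻¹ + (Real.log s - 1) with hψ
  have hψ_int : Integrable ψ (F.restrict (Set.Iio a)) :=
    (hf1_int.mul_const _).add (integrable_const _)
  have hcs : 0 < c * s := mul_pos hcpos hspos
  have hle : ∀ x ∈ Set.Iio a, Real.log ((1 - (x - μ) * ν) / c) ≤ ψ x := by
    intro x hx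
    have hu : (0:ℝ) < (1 - (x - μ) * ν) / c :=
      div_pos (by linarith [hnum x hx]) hcpos
    have h2 : Real.log ((1 - (x - μ) * ν) / c / s) ≤ (1 - (x - μ) * ν) / c / s - 1 :=
      Real.log_le_sub_one_of_pos (div_pos hu hspos)
    rw [Real.log_div hu.ne' hspos.ne'] at h2
    have h3 : (1 - (x - μ) * ν) / c / s = (1 - (x - μ) * ν) * (c * s)⁻¹ := by
      rw [div_div, div_eq_mul_inv]
    simp only [hψ]
    rw [h3] at h2
    linarith
  have hmeas : AEStronglyMeasurable (fun x => Real.log ((1 - (x - μ) * ν) / c))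
      (F.restrict (Set.Iio a)) :=
    (Real.measurable_log.comp (by fun_prop)).aestronglyMeasurable
  have haebound : ∀ᵐ x ∂(F.restrict (Set.Iio a)), ‖Real.log ((1 - (x - μ) * ν) / c)‖ ≤ ψ x := by
    rw [ae_restrict_iff' measurableSet_Iio]
    refine ae_of_all _ fun x hx => ?_
    rw [Real.norm_eq_abs, abs_of_nonneg (hlog_nonneg x hx)]
    exact hle x hx
  have h_int : Integrable (fun x => Real.log ((1 - (x - μ) * ν) / c))
      (F.restrict (Set.Iio a)) := hψ_int.mono' hmeas haebound
  have haele : ∀ᵐ x ∂(F.restrict (Set.Iio a)),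
      Real.log ((1 - (x - μ) * ν) / c) ≤ ψ x := by
    rw [ae_restrict_iff' measurableSet_Iio]
    exact ae_of_all _ hle
  have hstep : ∫ x in Set.Iio a, Real.log ((1 - (x - μ) * ν) / c) ∂F
      ≤ ∫ x in Set.Iio a, ψ x ∂F := integral_mono_ae h_int hψ_int haele
  have hψval : ∫ x in Set.Iio a, ψ x ∂F = J * (c * s)⁻¹ + p * (Real.log s - 1) := by
    simp only [hψ]
    rw [integral_add (hf1_int.mul_const _) (integrable_const _), integral_mul_const,
      integral_const, measureReal_restrict_apply_univ, measureReal_def, smul_eq_mul]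
  have hJcs : J * (c * s)⁻¹ ≤ p := by
    have h4 : J * (c * s)⁻¹ ≤ (c * (1 - μt)) * (c * s)⁻¹ :=
      mul_le_mul_of_nonneg_right hJ_le (inv_nonneg.mpr hcs.le)
    have h5 : (c * (1 - μt)) * (c * s)⁻¹ = p := by
      rw [← hps]
      field_simp
    linarith
  calc ∫ x in Set.Iio a, Real.log ((1 - (x - μ) * ν) / c) ∂F
      ≤ J * (c * s)⁻¹ + p * (Real.log s - 1) := by rw [← hψval]; exact hstep
    _ ≤ p * Real.log s := by nlinarith
end

section
/- Let F be a probability measure supported in (-∞,1] with finite mean and let μ satisfy E(F) ≤ μ < 1. Then the supremum defining D̃_inf(F,μ) is attained: there exists ν* ∈ [0, 1/(1−μ)] with L(ν*;F,μ) = D̃_inf(F,μ). Moreover, if F is not the point mass at μ, then this maximizer is unique. -/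
open MeasureTheory ProbabilityTheory Set Filter
open scoped ENNReal NNReal Classical BoundedContinuousFunction

section

open scoped Topology

namespace Stmt19Aux

variable {μ : ℝ}

noncomputable def f (μ ν x : ℝ) : ℝ := Real.log (1 - (x - μ) * ν)
noncomputable def U (μ x : ℝ) : ℝ := Real.log (1 + |x - μ| * (1 - μ)⁻¹)

lemma nb_pos (hμ : μ < 1) : 0 < (1 - μ)⁻¹ := inv_pos.2 (by linarith)

lemma U_nonneg (μ x : ℝ) (hμ : μ < 1) : 0 ≤ U μ x := by
  apply Real.log_nonneg
  nlinarith [abs_nonneg (x - μ), nb_pos hμ]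

lemma f_le_U (hμ : μ < 1) {ν : ℝ} (hν : ν ∈ Icc (0:ℝ) (1 - μ)⁻¹) (x : ℝ) :
    f μ ν x ≤ U μ x := by
  have h1 : |1 - (x - μ) * ν| ≤ 1 + |x - μ| * (1 - μ)⁻¹ := by
    refine (abs_sub _ _).trans ?_
    rw [abs_one, abs_mul]
    have : |x - μ| * |ν| ≤ |x - μ| * (1 - μ)⁻¹ := by
      apply mul_le_mul_of_nonneg_left _ (abs_nonneg _)
      rw [abs_of_nonneg hν.1]; exact hν.2
    linarith
  rcases eq_or_lt_of_le (abs_nonneg (1 - (x - μ) * ν)) with h0 | h0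
  · rw [f, ← Real.log_abs, ← h0, Real.log_zero]
    exact U_nonneg μ x hμ
  · rw [f, ← Real.log_abs]
    exact Real.log_le_log h0 h1

lemma meas_f (μ ν : ℝ) : Measurable (f μ ν) :=
  Real.measurable_log.comp (measurable_const.sub ((measurable_id.sub_const μ).mul_const ν))

lemma meas_U (μ : ℝ) : Measurable (U μ) :=
  Real.measurable_log.comp
    (measurable_const.add (((measurable_id.sub_const μ).abs).mul_const _))

variable {F : Measure ℝ} [IsFiniteMeasure F]

lemma U_int (hμ : μ < 1) (hint : Integrable (fun x : ℝ => x) F) : Integrable (U μ) F := by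
  have hb : Integrable (fun x : ℝ => (|x| + |μ|) * (1 - μ)⁻¹) F :=
    (hint.norm.add (integrable_const _)).mul_const _
  refine hb.mono (meas_U μ).aestronglyMeasurable (Filter.Eventually.of_forall fun x => ?_)
  have h1 : U μ x ≤ |x - μ| * (1 - μ)⁻¹ := by
    have := Real.log_le_sub_one_of_pos
      (show (0:ℝ) < 1 + |x - μ| * (1 - μ)⁻¹ by nlinarith [abs_nonneg (x - μ), nb_pos hμ])
    rw [U]; linarith
  have h2 : |x - μ| * (1 - μ)⁻¹ ≤ (|x| + |μ|) * (1 - μ)⁻¹ :=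
    mul_le_mul_of_nonneg_right (abs_sub _ _) (nb_pos hμ).le
  have h3 : (0:ℝ) ≤ (|x| + |μ|) * (1 - μ)⁻¹ := mul_nonneg (by positivity) (nb_pos hμ).le
  rw [Real.norm_eq_abs, Real.norm_eq_abs, abs_of_nonneg (U_nonneg μ x hμ), abs_of_nonneg h3]
  linarith

lemma ae_le_one (hsupp : F (Set.Ioi 1) = 0) : ∀ᵐ x ∂F, x ≤ 1 := by
  rw [ae_iff]
  convert hsupp using 2
  ext x; simp [Set.mem_Ioi, not_le]

lemma arg_lower (hμ : μ < 1) {ν : ℝ} (hν : ν ∈ Ico (0:ℝ) (1 - μ)⁻¹) {x : ℝ} (hx : x ≤ 1) :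
    1 - (1 - μ) * ν ≤ 1 - (x - μ) * ν := by
  have : (x - μ) * ν ≤ (1 - μ) * ν := mul_le_mul_of_nonneg_right (by linarith) hν.1
  linarith

lemma c_pos (hμ : μ < 1) {ν : ℝ} (hν : ν ∈ Ico (0:ℝ) (1 - μ)⁻¹) : 0 < 1 - (1 - μ) * ν := by
  have h1 : (1 - μ) * ν < (1 - μ) * (1 - μ)⁻¹ := mul_lt_mul_of_pos_left hν.2 (by linarith)
  rw [mul_inv_cancel₀ (by linarith : (1:ℝ) - μ ≠ 0)] at h1
  linarith

lemma bad_null (hμ : μ < 1) (hsupp : F (Set.Ioi 1) = 0) {ν : ℝ}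
    (hν : ν ∈ Ico (0:ℝ) (1 - μ)⁻¹) : F {x | 1 - (x - μ) * ν ≤ 0} = 0 := by
  refine measure_mono_null (fun x hx => ?_) hsupp
  simp only [Set.mem_setOf_eq] at hx
  by_contra h
  simp only [Set.mem_Ioi, not_lt] at h
  have := arg_lower hμ hν h
  have := c_pos hμ hν
  linarith

lemma f_int (hμ : μ < 1) (hsupp : F (Set.Ioi 1) = 0) (hint : Integrable (fun x : ℝ => x) F)
    {ν : ℝ} (hν : ν ∈ Ico (0:ℝ) (1 - μ)⁻¹) : Integrable (f μ ν) F := by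
  have hb : Integrable (fun x : ℝ => |Real.log (1 - (1 - μ) * ν)| + U μ x) F :=
    (integrable_const _).add (U_int hμ hint)
  refine hb.mono (meas_f μ ν).aestronglyMeasurable ?_
  filter_upwards [ae_le_one hsupp] with x hx
  have hc := c_pos hμ hν
  have hl : Real.log (1 - (1 - μ) * ν) ≤ f μ ν x :=
    Real.log_le_log hc (arg_lower hμ hν hx)
  have hu : f μ ν x ≤ U μ x := f_le_U hμ ⟨hν.1, hν.2.le⟩ x
  have h3 : 0 ≤ |Real.log (1 - (1 - μ) * ν)| + U μ x :=
    add_nonneg (abs_nonneg _) (U_nonneg μ x hμ)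
  rw [Real.norm_eq_abs, Real.norm_eq_abs, abs_of_nonneg h3, abs_le]
  constructor
  · have : -|Real.log (1 - (1 - μ) * ν)| ≤ Real.log (1 - (1 - μ) * ν) := neg_abs_le _
    have := U_nonneg μ x hμ
    linarith
  · have := abs_nonneg (Real.log (1 - (1 - μ) * ν))
    linarith



lemma LL_eq (hμ : μ < 1) (hsupp : F (Set.Ioi 1) = 0) (hint : Integrable (fun x : ℝ => x) F)
    {ν : ℝ} (hν : ν ∈ Ico (0:ℝ) (1 - μ)⁻¹) :
    LL F μ ν = ((∫ x, f μ ν x ∂F : ℝ) : EReal) := by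
  rw [LL, if_pos ⟨f_int hμ hsupp hint hν, bad_null hμ hsupp hν⟩]; rfl

lemma LL_zero (F : Measure ℝ) [IsProbabilityMeasure F] (μ : ℝ) : LL F μ 0 = 0 := by
  rw [LL, if_pos]
  · norm_num
  constructor
  · simp
  · convert measure_empty (μ := F)
    ext x; simp

lemma LL_le_B (hμ : μ < 1) (hint : Integrable (fun x : ℝ => x) F)
    {ν : ℝ} (hν : ν ∈ Icc (0:ℝ) (1 - μ)⁻¹) :
    LL F μ ν ≤ ((∫ x, U μ x ∂F : ℝ) : EReal) := by
  rw [LL]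
  split_ifs with h
  · exact_mod_cast EReal.coe_le_coe_iff.2
      (integral_mono h.1 (U_int hμ hint) (f_le_U hμ hν))
  · exact bot_le

/-- Sequential continuity of the integral on `[0, (1-μ)⁻¹)`. -/
lemma tendsto_int (hμ : μ < 1) (hsupp : F (Set.Ioi 1) = 0)
    (hint : Integrable (fun x : ℝ => x) F)
    {ν : ℕ → ℝ} (hmem : ∀ n, ν n ∈ Icc (0:ℝ) (1 - μ)⁻¹)
    {ν₀ : ℝ} (hν₀ : ν₀ ∈ Ico (0:ℝ) (1 - μ)⁻¹) (htend : Tendsto ν atTop (𝓝 ν₀)) :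
    Tendsto (fun n => ∫ x, f μ (ν n) x ∂F) atTop (𝓝 (∫ x, f μ ν₀ x ∂F)) := by
  set ν₁ : ℝ := (ν₀ + (1 - μ)⁻¹) / 2 with hν₁def
  have hν₁ : ν₁ ∈ Ico (0:ℝ) (1 - μ)⁻¹ := by
    constructor
    · have := hν₀.1; have := nb_pos hμ; rw [hν₁def]; linarith
    · have := hν₀.2; rw [hν₁def]; linarith
  have hc₁ := c_pos hμ hν₁
  have hev : ∀ᶠ n in atTop, ν n ≤ ν₁ := by
    have : ν₀ < ν₁ := by rw [hν₁def]; have := hν₀.2; linarith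
    exact htend.eventually_le_const this
  refine tendsto_integral_filter_of_dominated_convergence
    (fun x => |Real.log (1 - (1 - μ) * ν₁)| + U μ x)
    (Filter.Eventually.of_forall fun n => (meas_f μ (ν n)).aestronglyMeasurable)
    ?_ ((integrable_const _).add (U_int hμ hint)) ?_
  · filter_upwards [hev] with n hn
    filter_upwards [ae_le_one hsupp] with x hx
    have hl : Real.log (1 - (1 - μ) * ν₁) ≤ f μ (ν n) x := by
      refine Real.log_le_log hc₁ ?_
      calc 1 - (1 - μ) * ν₁ ≤ 1 - (1 - μ) * ν n := by
            have : (1 - μ) * ν n ≤ (1 - μ) * ν₁ :=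
              mul_le_mul_of_nonneg_left hn (by linarith)
            linarith
        _ ≤ 1 - (x - μ) * ν n := arg_lower hμ ⟨(hmem n).1, lt_of_le_of_lt hn hν₁.2⟩ hx
    have hu : f μ (ν n) x ≤ U μ x := f_le_U hμ (hmem n) x
    have h3 : 0 ≤ |Real.log (1 - (1 - μ) * ν₁)| + U μ x :=
      add_nonneg (abs_nonneg _) (U_nonneg μ x hμ)
    rw [Real.norm_eq_abs, abs_le]
    have h4 := neg_abs_le (Real.log (1 - (1 - μ) * ν₁))
    have h5 := abs_nonneg (Real.log (1 - (1 - μ) * ν₁))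
    have h6 := U_nonneg μ x hμ
    constructor <;> linarith
  · filter_upwards [ae_le_one hsupp] with x hx
    have harg : 0 < 1 - (x - μ) * ν₀ := lt_of_lt_of_le (c_pos hμ hν₀) (arg_lower hμ hν₀ hx)
    have hcont : ContinuousAt Real.log (1 - (x - μ) * ν₀) :=
      Real.continuousAt_log (ne_of_gt harg)
    have h2 : Tendsto (fun n => 1 - (x - μ) * ν n) atTop (𝓝 (1 - (x - μ) * ν₀)) :=
      tendsto_const_nhds.sub (htend.const_mul _)
    exact hcont.tendsto.comp h2



lemma endpoint (hμ : μ < 1) (hsupp : F (Set.Ioi 1) = 0) (hint : Integrable (fun x : ℝ => x) F)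
    {ν : ℕ → ℝ} (hmem : ∀ n, ν n ∈ Ico (0:ℝ) (1 - μ)⁻¹)
    (htend : Tendsto ν atTop (𝓝 (1 - μ)⁻¹)) {D : ℝ}
    (hr : Tendsto (fun n => ∫ x, f μ (ν n) x ∂F) atTop (𝓝 D)) :
    Integrable (f μ (1 - μ)⁻¹) F ∧ F {x | 1 - (x - μ) * (1 - μ)⁻¹ ≤ 0} = 0 ∧
      D ≤ ∫ x, f μ (1 - μ)⁻¹ x ∂F := by
  set nb : ℝ := (1 - μ)⁻¹ with hnb
  have hnb1 : (1 - μ) * nb = 1 := mul_inv_cancel₀ (by linarith : (1:ℝ) - μ ≠ 0)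
  set B : ℝ := ∫ x, U μ x ∂F with hB
  set r : ℕ → ℝ := fun n => ∫ x, f μ (ν n) x ∂F with hrdef
  have hUint := U_int (F := F) hμ hint
  have hfn_int : ∀ n, Integrable (f μ (ν n)) F := fun n => f_int hμ hsupp hint (hmem n)
  -- nonneg differences
  have hh_nn : ∀ n x, 0 ≤ U μ x - f μ (ν n) x := fun n x =>
    sub_nonneg.2 (f_le_U hμ ⟨(hmem n).1, (hmem n).2.le⟩ x)
  have hhbar_nn : ∀ x, 0 ≤ U μ x - f μ nb x := fun x =>
    sub_nonneg.2 (f_le_U hμ ⟨(nb_pos hμ).le, le_rfl⟩ x)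
  -- lintegral of differences
  have hof : ∀ n, ∫⁻ x, ENNReal.ofReal (U μ x - f μ (ν n) x) ∂F = ENNReal.ofReal (B - r n) := by
    intro n
    have h1 : ENNReal.ofReal (∫ x, (U μ x - f μ (ν n) x) ∂F)
        = ∫⁻ x, ENNReal.ofReal (U μ x - f μ (ν n) x) ∂F :=
      ofReal_integral_eq_lintegral_ofReal (hUint.sub (hfn_int n))
        (Filter.Eventually.of_forall (hh_nn n))
    rw [← h1, integral_sub hUint (hfn_int n)]
  have hrB : ∀ n, r n ≤ B := fun n =>
    integral_mono (hfn_int n) hUint (f_le_U hμ ⟨(hmem n).1, (hmem n).2.le⟩)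
  have hDB : D ≤ B := le_of_tendsto hr (Filter.Eventually.of_forall hrB)
  -- Fatou
  have hFatou := lintegral_liminf_le (μ := F)
    (f := fun n x => ENNReal.ofReal (U μ x - f μ (ν n) x)) (u := atTop)
    (fun n => ((meas_U μ).sub (meas_f μ (ν n))).ennreal_ofReal)
  have hlim : Tendsto (fun n => ENNReal.ofReal (B - r n)) atTop (𝓝 (ENNReal.ofReal (B - D))) :=
    ENNReal.tendsto_ofReal (tendsto_const_nhds.sub hr)
  have hliminf : Filter.liminf (fun n => ∫⁻ x, ENNReal.ofReal (U μ x - f μ (ν n) x) ∂F) atTop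
      = ENNReal.ofReal (B - D) := by
    simp only [hof]; exact hlim.liminf_eq
  -- pointwise lower bound
  have hptwise : ∀ᵐ x ∂F, ENNReal.ofReal (U μ x - f μ nb x)
      + Set.indicator {(1:ℝ)} (fun _ => (⊤ : ℝ≥0∞)) x
      ≤ Filter.liminf (fun n => ENNReal.ofReal (U μ x - f μ (ν n) x)) atTop := by
    filter_upwards [ae_le_one hsupp] with x hx
    rcases eq_or_lt_of_le hx with h1 | h1
    · -- x = 1 : liminf is ⊤
      have hargpos : ∀ n, 0 < 1 - (x - μ) * ν n := fun n => by
        rw [h1]; exact c_pos hμ (hmem n)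
      have harg0 : Tendsto (fun n => 1 - (x - μ) * ν n) atTop (𝓝 0) := by
        have h2 : Tendsto (fun n => 1 - (x - μ) * ν n) atTop (𝓝 (1 - (x - μ) * nb)) :=
          tendsto_const_nhds.sub (htend.const_mul _)
        have h3 : 1 - (x - μ) * nb = 0 := by rw [h1, hnb1]; ring
        rwa [h3] at h2
      have hlog : Tendsto (fun n => Real.log (1 - (x - μ) * ν n)) atTop atBot := by
        refine Real.tendsto_log_nhdsNE_zero.comp ?_
        exact tendsto_nhdsWithin_of_tendsto_nhds_of_eventually_within _ harg0
          (Filter.Eventually.of_forall fun n => (hargpos n).ne')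
      have hneg : Tendsto (fun n => -Real.log (1 - (x - μ) * ν n)) atTop atTop :=
        tendsto_neg_atBot_atTop.comp hlog
      have hh_top : Tendsto (fun n => U μ x - f μ (ν n) x) atTop atTop := by
        refine (tendsto_atTop_add_const_left atTop (U μ x) hneg).congr fun n => ?_
        simp only [f]; ring
      have : Tendsto (fun n => ENNReal.ofReal (U μ x - f μ (ν n) x)) atTop (𝓝 ⊤) :=
        ENNReal.tendsto_ofReal_atTop.comp hh_top
      rw [this.liminf_eq]
      exact le_top
    · -- x < 1
      have hind : Set.indicator {(1:ℝ)} (fun _ => (⊤ : ℝ≥0∞)) x = 0 :=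
        Set.indicator_of_notMem (by simpa using h1.ne) _
      have harg : 0 < 1 - (x - μ) * nb := by
        have : (x - μ) * nb < (1 - μ) * nb :=
          mul_lt_mul_of_pos_right (by linarith) (nb_pos hμ)
        rw [hnb1] at this; linarith
      have hh_tend : Tendsto (fun n => U μ x - f μ (ν n) x) atTop (𝓝 (U μ x - f μ nb x)) := by
        refine tendsto_const_nhds.sub ?_
        exact (Real.continuousAt_log harg.ne').tendsto.comp
          (tendsto_const_nhds.sub (htend.const_mul _))
      have : Tendsto (fun n => ENNReal.ofReal (U μ x - f μ (ν n) x)) atTop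
          (𝓝 (ENNReal.ofReal (U μ x - f μ nb x))) :=
        (ENNReal.continuous_ofReal.tendsto _).comp hh_tend
      rw [this.liminf_eq, hind, add_zero]
  -- combine
  have hkey : ∫⁻ x, (ENNReal.ofReal (U μ x - f μ nb x)
      + Set.indicator {(1:ℝ)} (fun _ => (⊤ : ℝ≥0∞)) x) ∂F ≤ ENNReal.ofReal (B - D) := by
    refine le_trans (lintegral_mono_ae ?_) (le_trans hFatou hliminf.le)
    exact hptwise
  rw [lintegral_add_left (f := fun x => ENNReal.ofReal (U μ x - f μ nb x)) (((meas_U μ).sub (meas_f μ nb)).ennreal_ofReal),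
    lintegral_indicator_const (measurableSet_singleton 1)] at hkey
  have hfin : ENNReal.ofReal (B - D) < ⊤ := ENNReal.ofReal_lt_top
  have hF1 : F {(1:ℝ)} = 0 := by
    by_contra h
    rw [ENNReal.top_mul h] at hkey
    exact absurd (le_trans le_add_self hkey) (by simp)
  have hlint : ∫⁻ x, ENNReal.ofReal (U μ x - f μ nb x) ∂F ≤ ENNReal.ofReal (B - D) := by
    rw [hF1, mul_zero, add_zero] at hkey; exact hkey
  have hbar_int : Integrable (fun x => U μ x - f μ nb x) F := by
    refine ⟨((meas_U μ).sub (meas_f μ nb)).aestronglyMeasurable, ?_⟩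
    rw [hasFiniteIntegral_iff_ofReal (Filter.Eventually.of_forall hhbar_nn)]
    exact lt_of_le_of_lt hlint hfin
  have hfnb_int : Integrable (f μ nb) F := by
    have : (fun x => U μ x - (U μ x - f μ nb x)) = f μ nb := by funext x; ring
    rw [← this]; exact hUint.sub hbar_int
  have hbad : F {x | 1 - (x - μ) * nb ≤ 0} = 0 := by
    refine measure_mono_null (fun x hx => ?_) (measure_union_null hF1 hsupp)
    simp only [Set.mem_setOf_eq] at hx
    have hx1 : 1 ≤ x := by
      by_contra h
      push_neg at h
      have : (x - μ) * nb < (1 - μ) * nb := mul_lt_mul_of_pos_right (by linarith) (nb_pos hμ)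
      rw [hnb1] at this; linarith
    rcases eq_or_lt_of_le hx1 with h | h
    · exact Or.inl h.symm
    · exact Or.inr h
  have hintle : ∫ x, (U μ x - f μ nb x) ∂F ≤ B - D := by
    have := ofReal_integral_eq_lintegral_ofReal hbar_int (Filter.Eventually.of_forall hhbar_nn)
    rw [← this] at hlint
    exact (ENNReal.ofReal_le_ofReal_iff (by linarith)).1 hlint
  refine ⟨hfnb_int, hbad, ?_⟩
  rw [integral_sub hUint hfnb_int] at hintle
  linarith



lemma eq_dirac (F : Measure ℝ) [IsProbabilityMeasure F] {μ : ℝ} (h : F {μ}ᶜ = 0) :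
    F = Measure.dirac μ := by
  have h1 : F {μ} = 1 := by
    have h2 := measure_add_measure_compl (μ := F) (measurableSet_singleton μ)
    rw [h, add_zero] at h2
    simpa using h2
  ext s hs
  rw [Measure.dirac_apply' _ hs]
  by_cases hμs : μ ∈ s
  · have hle : F {μ} ≤ F s := measure_mono (Set.singleton_subset_iff.2 hμs)
    have : F s = 1 := le_antisymm prob_le_one (h1 ▸ hle)
    rw [this, Set.indicator_of_mem hμs]
    rfl
  · have hsub : s ⊆ {μ}ᶜ := fun x hx => by
      simp only [Set.mem_compl_iff, Set.mem_singleton_iff]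
      rintro rfl; exact hμs hx
    have : F s = 0 := le_antisymm (h ▸ measure_mono hsub) (zero_le)
    rw [this, Set.indicator_of_notMem hμs]

lemma exists_max (F : Measure ℝ) [IsProbabilityMeasure F] (hsupp : F (Set.Ioi 1) = 0)
    (hint : Integrable (fun x : ℝ => x) F) {μ : ℝ} (hμ : μ < 1) :
    ∃ ν' ∈ Set.Icc (0 : ℝ) (1 - μ)⁻¹, LL F μ ν' = Dtilde F μ := by
  have hnb := nb_pos hμ
  have hDge : (0 : EReal) ≤ Dtilde F μ := by
    rw [← LL_zero F μ]
    exact le_iSup₂ (f := fun ν (_ : ν ∈ Set.Icc (0:ℝ) (1 - μ)⁻¹) => LL F μ ν) 0 ⟨le_rfl, hnb.le⟩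
  have hDle : Dtilde F μ ≤ ((∫ x, U μ x ∂F : ℝ) : EReal) :=
    iSup₂_le fun ν hν => LL_le_B hμ hint hν
  set D : ℝ := (Dtilde F μ).toReal with hDdef
  have hD : Dtilde F μ = (D : EReal) := by
    rw [hDdef]
    exact (EReal.coe_toReal (ne_top_of_le_ne_top (EReal.coe_ne_top _) hDle)
      (fun h => by rw [h] at hDge; exact absurd hDge (by simp))).symm
  by_cases hend : LL F μ (1 - μ)⁻¹ = Dtilde F μ
  · exact ⟨(1 - μ)⁻¹, ⟨hnb.le, le_rfl⟩, hend⟩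
  have hltD : LL F μ (1 - μ)⁻¹ < (D : EReal) := by
    rw [← hD]
    exact lt_of_le_of_ne
      (le_iSup₂ (f := fun ν (_ : ν ∈ Set.Icc (0:ℝ) (1 - μ)⁻¹) => LL F μ ν) _ ⟨hnb.le, le_rfl⟩)
      hend
  have happrox : ∀ n : ℕ, ∃ s ∈ Set.Icc (0:ℝ) (1 - μ)⁻¹,
      max (LL F μ (1 - μ)⁻¹) ((D - 1/(n+1) : ℝ) : EReal) < LL F μ s := by
    intro n
    have h1 : max (LL F μ (1 - μ)⁻¹) ((D - 1/(n+1) : ℝ) : EReal) < Dtilde F μ := by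
      rw [hD]
      refine max_lt (hD ▸ hltD) ?_
      exact_mod_cast sub_lt_self D (by positivity : (0:ℝ) < 1/(n+1))
    rw [Dtilde] at h1
    rcases lt_iSup_iff.1 h1 with ⟨s, hs⟩
    rcases lt_iSup_iff.1 hs with ⟨hsmem, hlt'⟩
    exact ⟨s, hsmem, hlt'⟩
  choose t hmem hgt using happrox
  have hIco : ∀ n, t n ∈ Set.Ico (0:ℝ) (1 - μ)⁻¹ := by
    intro n
    refine ⟨(hmem n).1, lt_of_le_of_ne (hmem n).2 fun h => ?_⟩
    have h2 := hgt n
    rw [h] at h2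
    exact absurd (le_max_left _ ((D - 1/(n+1) : ℝ) : EReal)) (not_le.2 h2)
  have hLLt : ∀ n, LL F μ (t n) = ((∫ x, f μ (t n) x ∂F : ℝ) : EReal) := fun n =>
    LL_eq hμ hsupp hint (hIco n)
  set r : ℕ → ℝ := fun n => ∫ x, f μ (t n) x ∂F with hrdef
  have hrle : ∀ n, r n ≤ D := by
    intro n
    have : LL F μ (t n) ≤ (D : EReal) := hD ▸
      le_iSup₂ (f := fun ν (_ : ν ∈ Set.Icc (0:ℝ) (1 - μ)⁻¹) => LL F μ ν) _ (hmem n)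
    rw [hLLt n] at this
    exact_mod_cast this
  have hrgt : ∀ n, D - 1/(n+1) < r n := by
    intro n
    have := lt_of_le_of_lt (le_max_right (LL F μ (1 - μ)⁻¹) _) (hgt n)
    rw [hLLt n] at this
    exact_mod_cast this
  have hrt : Tendsto r atTop (𝓝 D) := by
    have hlow : Tendsto (fun n : ℕ => D - 1/(n+1)) atTop (𝓝 D) := by
      have : Tendsto (fun n : ℕ => 1/((n:ℝ)+1)) atTop (𝓝 0) :=
        tendsto_one_div_add_atTop_nhds_zero_nat
      simpa using tendsto_const_nhds.sub this
    exact tendsto_of_tendsto_of_tendsto_of_le_of_le hlow tendsto_const_nhds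
      (fun n => (hrgt n).le) hrle
  obtain ⟨ν', hν'mem, φ, hφmono, hφt⟩ :=
    (isCompact_Icc (a := (0:ℝ)) (b := (1 - μ)⁻¹)).tendsto_subseq hmem
  have hrφ : Tendsto (fun n => ∫ x, f μ (t (φ n)) x ∂F) atTop (𝓝 D) :=
    hrt.comp hφmono.tendsto_atTop
  rcases eq_or_lt_of_le hν'mem.2 with heq | hlt2
  · exfalso
    obtain ⟨hi, hb, hge⟩ := endpoint hμ hsupp hint (fun n => hIco (φ n)) (heq ▸ hφt) hrφ
    have hLLnb : LL F μ (1 - μ)⁻¹ = ((∫ x, f μ (1 - μ)⁻¹ x ∂F : ℝ) : EReal) := by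
      rw [LL, if_pos ⟨hi, hb⟩]; rfl
    rw [hLLnb] at hltD
    exact absurd (EReal.coe_le_coe_iff.2 hge) (not_le.2 hltD)
  · have htnd := tendsto_int hμ hsupp hint (fun n => hmem (φ n)) ⟨hν'mem.1, hlt2⟩ hφt
    have hveq : ∫ x, f μ ν' x ∂F = D := tendsto_nhds_unique htnd hrφ
    exact ⟨ν', hν'mem, by rw [LL_eq hμ hsupp hint ⟨hν'mem.1, hlt2⟩, hveq, hD]⟩



lemma unique_max (F : Measure ℝ) [IsProbabilityMeasure F] (hsupp : F (Set.Ioi 1) = 0)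
    (hint : Integrable (fun x : ℝ => x) F) {μ : ℝ} (hμ : μ < 1)
    (hne : F ≠ Measure.dirac μ) {a b : ℝ}
    (ha : a ∈ Set.Icc (0:ℝ) (1 - μ)⁻¹ ∧ LL F μ a = Dtilde F μ)
    (hb : b ∈ Set.Icc (0:ℝ) (1 - μ)⁻¹ ∧ LL F μ b = Dtilde F μ) : a = b := by
  by_contra hab
  have hnb := nb_pos hμ
  have hDge : (0 : EReal) ≤ Dtilde F μ := by
    rw [← LL_zero F μ]
    exact le_iSup₂ (f := fun ν (_ : ν ∈ Set.Icc (0:ℝ) (1 - μ)⁻¹) => LL F μ ν) 0 ⟨le_rfl, hnb.le⟩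
  -- extract conditions at a and b
  have hca : Integrable (fun x => Real.log (1 - (x - μ) * a)) F
      ∧ F {x | 1 - (x - μ) * a ≤ 0} = 0 := by
    by_contra h
    rw [LL, if_neg h] at ha
    rw [← ha.2] at hDge
    exact absurd hDge (by simp)
  have hcb : Integrable (fun x => Real.log (1 - (x - μ) * b)) F
      ∧ F {x | 1 - (x - μ) * b ≤ 0} = 0 := by
    by_contra h
    rw [LL, if_neg h] at hb
    rw [← hb.2] at hDge
    exact absurd hDge (by simp)
  have hvala : Dtilde F μ = ((∫ x, f μ a x ∂F : ℝ) : EReal) := by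
    rw [← ha.2, LL, if_pos hca]; rfl
  have hvalb : Dtilde F μ = ((∫ x, f μ b x ∂F : ℝ) : EReal) := by
    rw [← hb.2, LL, if_pos hcb]; rfl
  set D : ℝ := ∫ x, f μ a x ∂F with hDdef
  have hDb : ∫ x, f μ b x ∂F = D := by
    have := hvala.symm.trans hvalb
    exact_mod_cast this.symm
  have hia : Integrable (f μ a) F := hca.1
  have hib : Integrable (f μ b) F := hcb.1
  set m : ℝ := (a + b)/2 with hmdef
  have hmmem : m ∈ Set.Icc (0:ℝ) (1 - μ)⁻¹ := by
    constructor
    · have := ha.1.1; have := hb.1.1; rw [hmdef]; linarith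
    · have := ha.1.2; have := hb.1.2; rw [hmdef]; linarith
  -- a.e. positivity
  have hpa : ∀ᵐ x ∂F, 0 < 1 - (x - μ) * a := by
    rw [ae_iff]
    convert hca.2 using 2
    ext x; simp [not_lt]
  have hpb : ∀ᵐ x ∂F, 0 < 1 - (x - μ) * b := by
    rw [ae_iff]
    convert hcb.2 using 2
    ext x; simp [not_lt]
  -- key pointwise concavity
  have hkey : ∀ᵐ x ∂F, (f μ a x + f μ b x)/2 ≤ f μ m x
      ∧ (x ≠ μ → (f μ a x + f μ b x)/2 < f μ m x) := by
    filter_upwards [hpa, hpb] with x h1 h2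
    have hmid : 1 - (x - μ) * m = (1/2 : ℝ) • (1 - (x - μ) * a) + (1/2 : ℝ) • (1 - (x - μ) * b) := by
      simp only [smul_eq_mul, hmdef]; ring
    constructor
    · have := strictConcaveOn_log_Ioi.concaveOn.2 (Set.mem_Ioi.2 h1) (Set.mem_Ioi.2 h2)
        (by norm_num : (0:ℝ) ≤ 1/2) (by norm_num : (0:ℝ) ≤ 1/2) (by norm_num)
      rw [f, f, f, hmid]
      simp only [smul_eq_mul] at this ⊢
      linarith
    · intro hxμ
      have hne2 : 1 - (x - μ) * a ≠ 1 - (x - μ) * b := by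
        intro h
        apply hab
        have hx : x - μ ≠ 0 := sub_ne_zero.2 hxμ
        have : (x - μ) * a = (x - μ) * b := by linarith
        exact mul_left_cancel₀ hx this
      have := strictConcaveOn_log_Ioi.2 (Set.mem_Ioi.2 h1) (Set.mem_Ioi.2 h2) hne2
        (by norm_num : (0:ℝ) < 1/2) (by norm_num : (0:ℝ) < 1/2) (by norm_num)
      rw [f, f, f, hmid]
      simp only [smul_eq_mul] at this ⊢
      linarith
  -- integrability at midpoint
  have havg_int : Integrable (fun x => (f μ a x + f μ b x)/2) F := (hia.add hib).div_const 2
  have him : Integrable (f μ m) F := by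
    have hg : Integrable (fun x => ‖U μ x‖ + ‖(f μ a x + f μ b x)/2‖) F :=
      (U_int hμ hint).norm.add havg_int.norm
    refine hg.mono (meas_f μ m).aestronglyMeasurable ?_
    filter_upwards [hkey] with x hx
    have hu : f μ m x ≤ U μ x := f_le_U hμ hmmem x
    have h0 : (0:ℝ) ≤ ‖U μ x‖ + ‖(f μ a x + f μ b x)/2‖ := by positivity
    rw [Real.norm_eq_abs (f μ m x), Real.norm_eq_abs, abs_of_nonneg h0, abs_le]
    have l1 : f μ m x ≤ ‖U μ x‖ := le_trans hu (le_abs_self _)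
    have l2 : -‖(f μ a x + f μ b x)/2‖ ≤ (f μ a x + f μ b x)/2 := neg_abs_le _
    have l3 := hx.1
    have l4 : (0:ℝ) ≤ ‖U μ x‖ := norm_nonneg _
    have l5 : (0:ℝ) ≤ ‖(f μ a x + f μ b x)/2‖ := norm_nonneg _
    constructor <;> linarith
  -- bad set at midpoint is null
  have hbadm : F {x | 1 - (x - μ) * m ≤ 0} = 0 := by
    refine measure_mono_null (fun x hx => ?_) (measure_union_null hca.2 hcb.2)
    simp only [Set.mem_setOf_eq, Set.mem_union] at hx ⊢
    by_contra h
    push_neg at h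
    have hmid : 1 - (x - μ) * m = ((1 - (x - μ) * a) + (1 - (x - μ) * b))/2 := by
      rw [hmdef]; ring
    have := h.1; have := h.2
    linarith
  have hLLm : LL F μ m = ((∫ x, f μ m x ∂F : ℝ) : EReal) := by
    rw [LL, if_pos ⟨him, hbadm⟩]; rfl
  -- compare integrals
  have havg_eq : ∫ x, (f μ a x + f μ b x)/2 ∂F = D := by
    rw [integral_div, integral_add hia hib, hDb, ← hDdef]
    ring
  have hle : ∫ x, (f μ a x + f μ b x)/2 ∂F ≤ ∫ x, f μ m x ∂F :=
    integral_mono_ae havg_int him (hkey.mono fun x hx => hx.1)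
  have hmle : ∫ x, f μ m x ∂F ≤ D := by
    have h1 : LL F μ m ≤ Dtilde F μ :=
      le_iSup₂ (f := fun ν (_ : ν ∈ Set.Icc (0:ℝ) (1 - μ)⁻¹) => LL F μ ν) m hmmem
    rw [hLLm, hvala] at h1
    exact_mod_cast h1
  have heq : ∫ x, f μ m x ∂F = D := le_antisymm hmle (havg_eq ▸ hle)
  -- the difference integrates to zero, hence vanishes a.e.
  set Δ : ℝ → ℝ := fun x => f μ m x - (f μ a x + f μ b x)/2 with hΔdef
  have hΔint : Integrable Δ F := him.sub havg_int
  have hΔnn : 0 ≤ᵐ[F] Δ := hkey.mono fun x hx => sub_nonneg.2 hx.1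
  have hΔ0 : ∫ x, Δ x ∂F = 0 := by
    simp only [hΔdef]
    rw [integral_sub him havg_int, heq, havg_eq, sub_self]
  have hΔae : Δ =ᵐ[F] 0 := (integral_eq_zero_iff_of_nonneg_ae hΔnn hΔint).1 hΔ0
  -- hence a.e. x = μ
  have haeμ : ∀ᵐ x ∂F, x = μ := by
    filter_upwards [hΔae, hkey] with x h1 h2
    by_contra hxμ
    have := h2.2 hxμ
    simp only [hΔdef, Pi.zero_apply] at h1
    linarith
  have hcompl : F {μ}ᶜ = 0 := by
    rw [ae_iff] at haeμ
    convert haeμ using 2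
    rfl
  exact hne (eq_dirac F hcompl)

end Stmt19Aux

end

/-- For `F` supported in `(-∞,1]` with finite mean and
`E(F) ≤ μ < 1`, the supremum defining `D̃_inf(F,μ)` is attained on `[0,1/(1-μ)]`;
moreover if `F` is not the point mass at `μ` then the maximizer is unique. -/
theorem stmt19 (F : Measure ℝ) [IsProbabilityMeasure F] (hsupp : F (Set.Ioi 1) = 0)
    (hint : Integrable (fun x : ℝ => x) F) (μ : ℝ) (hEF : ∫ x, x ∂F ≤ μ) (hμ : μ < 1) :
    (∃ ν' ∈ Set.Icc (0 : ℝ) (1 - μ)⁻¹, LL F μ ν' = Dtilde F μ) ∧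
    (F ≠ Measure.dirac μ →
      ∃! ν' : ℝ, ν' ∈ Set.Icc (0 : ℝ) (1 - μ)⁻¹ ∧ LL F μ ν' = Dtilde F μ) := by
  constructor
  · exact Stmt19Aux.exists_max F hsupp hint hμ
  · intro hne
    obtain ⟨ν', hmem, heq⟩ := Stmt19Aux.exists_max F hsupp hint hμ
    exact ⟨ν', ⟨hmem, heq⟩, fun y hy => Stmt19Aux.unique_max F hsupp hint hμ hne hy ⟨hmem, heq⟩⟩
end
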